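/- arXiv:1104.4587 — 4 statements merged into one kernel-verified Lean document; each statement's English description precedes it below -/
import Mathlib

section
/- Let A be a d×d complex matrix and write A = H + iK with H = (A + A*)/2 and K = (A − A*)/(2i) hermitian. Then the polar of the numerical range W(A) equals {ξ + iη : ξ, η ∈ ℝ, and I − ξH − ηK is positive semidefinite}. -/
open Matrix
open scoped ComplexOrder

/-- The numerical range of a `d × d` complex matrix `A`:
`W(A) = {⟨Ax, x⟩ : ‖x‖ = 1}`, where `⟨Ax, x⟩ = x* A x`. -/
def numericalRange {d : ℕ} (A : Matrix (Fin d) (Fin d) ℂ) : Set ℂ :=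
  {z | ∃ x : Fin d → ℂ, star x ⬝ᵥ x = 1 ∧ star x ⬝ᵥ A.mulVec x = z}

/-- The polar of a subset of `ℂ` (identifying `ℂ` with `ℝ²` via the real
inner product `⟨z, w⟩ = Re(z̄ w)`). -/
def polarSet (S : Set ℂ) : Set ℂ :=
  {z | ∀ w ∈ S, ((starRingEnd ℂ) z * w).re ≤ 1}

lemma conj_quad {d : ℕ} (A : Matrix (Fin d) (Fin d) ℂ) (x : Fin d → ℂ) :
    star x ⬝ᵥ Aᴴ.mulVec x = (starRingEnd ℂ) (star x ⬝ᵥ A.mulVec x) := by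
  simp only [dotProduct, Matrix.mulVec, Matrix.conjTranspose_apply, Pi.star_apply,
    map_sum, _root_.map_mul, RCLike.star_def, Complex.conj_conj, Finset.mul_sum]
  rw [Finset.sum_comm]
  exact Finset.sum_congr rfl fun i _ => Finset.sum_congr rfl fun j _ => by ring

lemma scalar_id (ξ η : ℝ) (w : ℂ) :
    1 - (ξ : ℂ) * ((1 / 2 : ℂ) * (w + (starRingEnd ℂ) w))
      - (η : ℂ) * ((1 / (2 * Complex.I)) * (w - (starRingEnd ℂ) w))
      = ((1 - ξ * w.re - η * w.im : ℝ) : ℂ) := by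
  have h1 : (starRingEnd ℂ) w = (w.re : ℂ) - (w.im : ℂ) * Complex.I := by
    simp [Complex.ext_iff]
  have h2 : w = (w.re : ℂ) + (w.im : ℂ) * Complex.I := (Complex.re_add_im w).symm
  set a := (w.re : ℂ)
  set b := (w.im : ℂ)
  rw [h1]
  nth_rewrite 1 [h2]
  nth_rewrite 1 [h2]
  have hI : Complex.I ≠ 0 := Complex.I_ne_zero
  push_cast
  field_simp
  ring_nf
  simp only [a, b]
  ring

lemma key_quad {d : ℕ} (A : Matrix (Fin d) (Fin d) ℂ) (ξ η : ℝ) (x : Fin d → ℂ)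
    (hx : star x ⬝ᵥ x = 1) :
    star x ⬝ᵥ ((1 : Matrix (Fin d) (Fin d) ℂ) - (ξ : ℂ) • ((1 / 2 : ℂ) • (A + Aᴴ))
        - (η : ℂ) • ((1 / (2 * Complex.I)) • (A - Aᴴ))).mulVec x
      = ((1 - ξ * (star x ⬝ᵥ A.mulVec x).re - η * (star x ⬝ᵥ A.mulVec x).im : ℝ) : ℂ) := by
  have hc := conj_quad A x
  simp only [Matrix.sub_mulVec, Matrix.add_mulVec, Matrix.smul_mulVec,
    Matrix.one_mulVec, dotProduct_sub, dotProduct_add, dotProduct_smul, smul_eq_mul,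
    hx, hc]
  rw [← scalar_id ξ η (star x ⬝ᵥ A.mulVec x)]

lemma herm_comb {d : ℕ} (A : Matrix (Fin d) (Fin d) ℂ) (ξ η : ℝ) :
    ((1 : Matrix (Fin d) (Fin d) ℂ) - (ξ : ℂ) • ((1 / 2 : ℂ) • (A + Aᴴ))
      - (η : ℂ) • ((1 / (2 * Complex.I)) • (A - Aᴴ))).IsHermitian := by
  have hH' : ((1 / 2 : ℂ) • (A + Aᴴ))ᴴ = (1 / 2 : ℂ) • (A + Aᴴ) := by
    rw [conjTranspose_smul, conjTranspose_add, conjTranspose_conjTranspose]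
    norm_num [add_comm]
  have hc : (1 / (2 * Complex.I) : ℂ) = -Complex.I / 2 := by
    field_simp
    simp [Complex.ext_iff]
  have hK' : ((1 / (2 * Complex.I) : ℂ) • (A - Aᴴ))ᴴ = (1 / (2 * Complex.I) : ℂ) • (A - Aᴴ) := by
    rw [conjTranspose_smul, conjTranspose_sub, conjTranspose_conjTranspose, hc]
    simp [smul_sub, sub_eq_add_neg, add_comm, Complex.ext_iff, neg_div]
  show _ = _
  simp only [conjTranspose_sub, conjTranspose_smul, conjTranspose_one, hH', hK',
    RCLike.star_def, Complex.conj_ofReal]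

theorem polar_numericalRange_eq_spectrahedron {d : ℕ} (A H K : Matrix (Fin d) (Fin d) ℂ)
    (hH : H = (1 / 2 : ℂ) • (A + Aᴴ)) (hK : K = (1 / (2 * Complex.I)) • (A - Aᴴ)) :
    polarSet (numericalRange A) =
      {z : ℂ | ∃ ξ η : ℝ, z = (ξ : ℂ) + (η : ℂ) * Complex.I ∧
        ((1 : Matrix (Fin d) (Fin d) ℂ) - (ξ : ℂ) • H - (η : ℂ) • K).PosSemidef} := by
  subst hH hK
  ext z
  simp only [polarSet, numericalRange, Set.mem_setOf_eq]
  constructor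
  · -- polar ⊆ spectrahedron
    intro hz
    refine ⟨z.re, z.im, (Complex.re_add_im z).symm, posSemidef_iff_dotProduct_mulVec.mpr ⟨herm_comb A z.re z.im, ?_⟩⟩
    intro x
    by_cases hx0 : x = 0
    · simp [hx0]
    · -- normalize x
      have hpos : (0 : ℂ) < star x ⬝ᵥ x := Matrix.dotProduct_star_self_pos_iff.2 hx0
      obtain ⟨hre, him⟩ := Complex.lt_def.mp hpos
      set t : ℝ := (star x ⬝ᵥ x).re with ht
      have htx : star x ⬝ᵥ x = (t : ℂ) := by
        apply Complex.ext <;> simp [ht, ← him]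
      have hre' : 0 < t := by simpa using hre
      set c : ℝ := (Real.sqrt t)⁻¹ with hcdef
      have hcpos : 0 < c := inv_pos.2 (Real.sqrt_pos.2 hre')
      have hcc : c * c * t = 1 := by
        rw [hcdef, ← mul_inv, Real.mul_self_sqrt hre'.le]
        exact inv_mul_cancel₀ hre'.ne'
      set y : Fin d → ℂ := (c : ℂ) • x with hy
      have hstar : star y = (c : ℂ) • star x := by
        rw [hy, star_smul]
        simp [Complex.conj_ofReal]
      have hy1 : star y ⬝ᵥ y = 1 := by
        rw [hstar, hy, smul_dotProduct, dotProduct_smul, htx, smul_eq_mul, smul_eq_mul,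
          ← Complex.ofReal_mul, ← Complex.ofReal_mul, ← mul_assoc] at *
        norm_cast
      have hmem := hz _ ⟨y, hy1, rfl⟩
      set w : ℂ := star y ⬝ᵥ A.mulVec y with hwdef
      have hwre : ((starRingEnd ℂ) z * w).re = z.re * w.re + z.im * w.im := by
        simp [Complex.mul_re]
      have hineq : 0 ≤ 1 - z.re * w.re - z.im * w.im := by
        rw [hwre] at hmem; linarith
      have hyMy := key_quad A z.re z.im y hy1
      rw [← hwdef] at hyMy
      have h0y : 0 ≤ star y ⬝ᵥ ((1 : Matrix (Fin d) (Fin d) ℂ)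
          - (z.re : ℂ) • ((1 / 2 : ℂ) • (A + Aᴴ))
          - (z.im : ℂ) • ((1 / (2 * Complex.I)) • (A - Aᴴ))).mulVec y := by
        rw [hyMy]
        exact Complex.zero_le_real.2 hineq
      have hscale : star y ⬝ᵥ ((1 : Matrix (Fin d) (Fin d) ℂ)
          - (z.re : ℂ) • ((1 / 2 : ℂ) • (A + Aᴴ))
          - (z.im : ℂ) • ((1 / (2 * Complex.I)) • (A - Aᴴ))).mulVec y
          = ((c * c : ℝ) : ℂ) * (star x ⬝ᵥ ((1 : Matrix (Fin d) (Fin d) ℂ)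
          - (z.re : ℂ) • ((1 / 2 : ℂ) • (A + Aᴴ))
          - (z.im : ℂ) • ((1 / (2 * Complex.I)) • (A - Aᴴ))).mulVec x) := by
        rw [hstar, hy, smul_dotProduct, Matrix.mulVec_smul, dotProduct_smul]
        push_cast
        ring_nf
      rw [hscale] at h0y
      set v := star x ⬝ᵥ ((1 : Matrix (Fin d) (Fin d) ℂ)
          - (z.re : ℂ) • ((1 / 2 : ℂ) • (A + Aᴴ))
          - (z.im : ℂ) • ((1 / (2 * Complex.I)) • (A - Aᴴ))).mulVec x with hv
      have hcc0 : (0:ℝ) < c * c := by positivity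
      have : v = (((c * c)⁻¹ : ℝ) : ℂ) * (((c * c : ℝ) : ℂ) * v) := by
        push_cast
        field_simp
      rw [this]
      exact mul_nonneg (Complex.zero_le_real.2 (by positivity)) h0y
  · -- spectrahedron ⊆ polar
    rintro ⟨ξ, η, rfl, hpsd⟩ w ⟨x, hx1, rfl⟩
    have h0 := hpsd.dotProduct_mulVec_nonneg x
    rw [key_quad A ξ η x hx1] at h0
    have h1 : 0 ≤ 1 - ξ * (star x ⬝ᵥ A.mulVec x).re - η * (star x ⬝ᵥ A.mulVec x).im :=
      Complex.zero_le_real.mp h0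
    have : ((starRingEnd ℂ) ((ξ : ℂ) + (η : ℂ) * Complex.I) * (star x ⬝ᵥ A.mulVec x)).re
        = ξ * (star x ⬝ᵥ A.mulVec x).re + η * (star x ⬝ᵥ A.mulVec x).im := by
      simp [Complex.mul_re, Complex.add_re, Complex.add_im]
    rw [this]
    linarith
end

section
/- Let H and K be d×d hermitian complex matrices and let p(ξ, η) = det(I − ξH − ηK). Then the spectrahedron {(ξ, η) ∈ ℝ² : I − ξH − ηK is positive semidefinite} equals the closure of the connected component containing the origin of the set {(ξ, η) ∈ ℝ² : p(ξ, η) > 0}. -/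
open Matrix
open scoped ComplexOrder

namespace SpectraAux

variable {d : ℕ}

/-- The quadratic form of a matrix. -/
noncomputable def quad (M : Matrix (Fin d) (Fin d) ℂ) (x : Fin d → ℂ) : ℂ :=
  dotProduct (star x) (M *ᵥ x)

lemma star_quad {M : Matrix (Fin d) (Fin d) ℂ} (hM : M.IsHermitian) (x : Fin d → ℂ) :
    star (quad M x) = quad M x := by
  unfold quad
  conv_lhs => rw [star_dotProduct, star_star]
  rw [star_mulVec, hM.eq, ← dotProduct_mulVec]

lemma quad_im {M : Matrix (Fin d) (Fin d) ℂ} (hM : M.IsHermitian) (x : Fin d → ℂ) :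
    (quad M x).im = 0 := by
  have h := star_quad hM x
  rw [Complex.star_def, Complex.conj_eq_iff_im] at h
  exact h


lemma quad_add (M N : Matrix (Fin d) (Fin d) ℂ) (x : Fin d → ℂ) :
    quad (M + N) x = quad M x + quad N x := by
  simp [quad, add_mulVec, dotProduct_add]

lemma quad_real_smul (M : Matrix (Fin d) (Fin d) ℂ) (c : ℝ) (x : Fin d → ℂ) :
    quad ((c : ℂ) • M) x = (c : ℂ) * quad M x := by
  simp [quad, smul_mulVec, dotProduct_smul, smul_eq_mul]

lemma quad_smul_vec (M : Matrix (Fin d) (Fin d) ℂ) (c : ℝ) (x : Fin d → ℂ) :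
    quad M ((c : ℂ) • x) = ((c * c : ℝ) : ℂ) * quad M x := by
  simp [quad, mulVec_smul, dotProduct_smul, smul_dotProduct, star_smul, smul_eq_mul,
    Complex.star_def, Complex.conj_ofReal]
  ring

lemma quad_bound (M : Matrix (Fin d) (Fin d) ℂ) (x : Fin d → ℂ) :
    ‖quad M x‖ ≤ (∑ i, ∑ j, ‖M i j‖) * ‖x‖ ^ 2 := by
  have h1 : quad M x = ∑ i, ∑ j, star x i * (M i j * x j) := by
    simp [quad, dotProduct, mulVec, Finset.mul_sum]
  rw [h1, Finset.sum_mul]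
  refine (norm_sum_le _ _).trans (Finset.sum_le_sum fun i _ => ?_)
  rw [Finset.sum_mul]
  refine (norm_sum_le _ _).trans (Finset.sum_le_sum fun j _ => ?_)
  rw [norm_mul, norm_mul]
  have hxi : ‖star x i‖ ≤ ‖x‖ := by
    rw [Pi.star_apply, norm_star]; exact norm_le_pi_norm x i
  have hxj : ‖x j‖ ≤ ‖x‖ := norm_le_pi_norm x j
  calc ‖star x i‖ * (‖M i j‖ * ‖x j‖) ≤ ‖x‖ * (‖M i j‖ * ‖x‖) := by
        exact mul_le_mul hxi (mul_le_mul_of_nonneg_left hxj (norm_nonneg _))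
          (by positivity) (norm_nonneg _)
    _ = ‖M i j‖ * ‖x‖ ^ 2 := by ring


lemma posSemidef_iff_quad {M : Matrix (Fin d) (Fin d) ℂ} (hM : M.IsHermitian) :
    M.PosSemidef ↔ ∀ x, 0 ≤ (quad M x).re := by
  constructor
  · intro h x
    exact (Complex.nonneg_iff.mp (posSemidef_iff_dotProduct_mulVec.mp h |>.2 x)).1
  · intro h
    exact posSemidef_iff_dotProduct_mulVec.mpr ⟨hM, fun x => Complex.nonneg_iff.mpr ⟨h x, (quad_im hM x).symm⟩⟩

lemma posDef_iff_quad {M : Matrix (Fin d) (Fin d) ℂ} (hM : M.IsHermitian) :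
    M.PosDef ↔ ∀ x, x ≠ 0 → 0 < (quad M x).re := by
  constructor
  · intro h x hx
    exact (Complex.pos_iff.mp ((posDef_iff_dotProduct_mulVec.mp h).2 hx)).1
  · intro h
    exact posDef_iff_dotProduct_mulVec.mpr ⟨hM, fun ⦃x⦄ hx => Complex.pos_iff.mpr ⟨h x hx, (quad_im hM x).symm⟩⟩

lemma posDef_real_smul {M : Matrix (Fin d) (Fin d) ℂ} (hM : M.PosDef) {t : ℝ} (ht : 0 < t) :
    ((t : ℂ) • M).PosDef := by
  have hherm : ((t : ℂ) • M).IsHermitian := by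
    unfold Matrix.IsHermitian
    rw [conjTranspose_smul, hM.1.eq, Complex.star_def, Complex.conj_ofReal]
  rw [posDef_iff_quad hherm]
  intro x hx
  rw [quad_real_smul, Complex.re_ofReal_mul]
  exact mul_pos ht ((posDef_iff_quad hM.1).mp hM x hx)

lemma posSemidef_real_smul {M : Matrix (Fin d) (Fin d) ℂ} (hM : M.PosSemidef) {t : ℝ}
    (ht : 0 ≤ t) : ((t : ℂ) • M).PosSemidef := by
  have hherm : ((t : ℂ) • M).IsHermitian := by
    unfold Matrix.IsHermitian
    rw [conjTranspose_smul, hM.1.eq, Complex.star_def, Complex.conj_ofReal]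
  rw [posSemidef_iff_quad hherm]
  intro x
  rw [quad_real_smul, Complex.re_ofReal_mul]
  exact mul_nonneg ht ((posSemidef_iff_quad hM.1).mp hM x)

/-- A positive semidefinite matrix with nonzero determinant is positive definite. -/
lemma posDef_of_posSemidef_det_ne_zero {M : Matrix (Fin d) (Fin d) ℂ} (hM : M.PosSemidef)
    (hdet : M.det ≠ 0) : M.PosDef := by
  refine posDef_iff_dotProduct_mulVec.mpr ⟨hM.1, fun ⦃x⦄ hx => ?_⟩
  refine lt_of_le_of_ne (hM.dotProduct_mulVec_nonneg x) fun h => ?_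
  have h0 : M *ᵥ x = 0 := (hM.dotProduct_mulVec_zero_iff x).mp h.symm
  have hinj : Function.Injective M.mulVec :=
    mulVec_injective_iff_isUnit.mpr ((Matrix.isUnit_iff_isUnit_det _).2 (isUnit_iff_ne_zero.mpr hdet))
  exact hx (hinj (by simp [h0]))

/-- Uniform lower bound for the quadratic form of a positive definite matrix. -/
lemma posDef_lb {M : Matrix (Fin d) (Fin d) ℂ} (hM : M.PosDef) :
    ∃ ε > 0, ∀ x : Fin d → ℂ, ε * ‖x‖ ^ 2 ≤ (quad M x).re := by
  rcases Nat.eq_zero_or_pos d with hd | hd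
  · subst hd
    refine ⟨1, one_pos, fun x => ?_⟩
    have hx : x = 0 := Subsingleton.elim _ _
    subst hx
    have h1 : quad M (0 : Fin 0 → ℂ) = 0 := by simp [quad]
    rw [h1, norm_zero]
    norm_num
  · have : Nontrivial (Fin d → ℂ) := by
      have : Nonempty (Fin d) := ⟨⟨0, hd⟩⟩
      infer_instance
    have hcont : Continuous fun x : Fin d → ℂ => (quad M x).re :=
      Complex.continuous_re.comp ((continuous_star.dotProduct
        (continuous_const.matrix_mulVec continuous_id)))
    have hsphne : (Metric.sphere (0 : Fin d → ℂ) 1).Nonempty :=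
      NormedSpace.sphere_nonempty.mpr zero_le_one
    obtain ⟨x₀, hx₀S, hmin⟩ := (isCompact_sphere (0 : Fin d → ℂ) 1).exists_isMinOn hsphne
      hcont.continuousOn
    have hx₀norm : ‖x₀‖ = 1 := mem_sphere_zero_iff_norm.mp hx₀S
    have hx₀ne : x₀ ≠ 0 := by
      intro h; rw [h, norm_zero] at hx₀norm; exact one_ne_zero hx₀norm.symm
    refine ⟨(quad M x₀).re, (posDef_iff_quad hM.1).mp hM x₀ hx₀ne, fun x => ?_⟩
    rcases eq_or_ne x 0 with rfl | hx
    · simp [quad]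
    · have hnx : (0 : ℝ) < ‖x‖ := norm_pos_iff.mpr hx
      set y : Fin d → ℂ := ((‖x‖⁻¹ : ℝ) : ℂ) • x with hy
      have hyS : y ∈ Metric.sphere (0 : Fin d → ℂ) 1 := by
        rw [mem_sphere_zero_iff_norm, hy, norm_smul]
        simp [abs_of_pos (inv_pos.mpr hnx), inv_mul_cancel₀ hnx.ne']
      have hq : (quad M y).re = (‖x‖⁻¹ * ‖x‖⁻¹) * (quad M x).re := by
        rw [hy, quad_smul_vec, Complex.re_ofReal_mul]
      have hmin' : (quad M x₀).re ≤ (quad M y).re := hmin hyS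
      rw [hq] at hmin'
      have h2 : (quad M x₀).re * ‖x‖ ^ 2 ≤ (‖x‖⁻¹ * ‖x‖⁻¹) * (quad M x).re * ‖x‖ ^ 2 :=
        mul_le_mul_of_nonneg_right hmin' (by positivity)
      calc (quad M x₀).re * ‖x‖ ^ 2 ≤ (‖x‖⁻¹ * ‖x‖⁻¹) * (quad M x).re * ‖x‖ ^ 2 := h2
        _ = (quad M x).re := by
            rw [sq]
            field_simp


variable (H K : Matrix (Fin d) (Fin d) ℂ)

/-- The matrix pencil. -/
noncomputable def mat (v : ℝ × ℝ) : Matrix (Fin d) (Fin d) ℂ :=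
  1 - (v.1 : ℂ) • H - (v.2 : ℂ) • K

variable {H K}

lemma mat_herm (hH : H.IsHermitian) (hK : K.IsHermitian) (v : ℝ × ℝ) :
    (mat H K v).IsHermitian := by
  have h1 : ((v.1 : ℂ) • H).IsHermitian := by
    unfold Matrix.IsHermitian
    rw [conjTranspose_smul, hH.eq, Complex.star_def, Complex.conj_ofReal]
  have h2 : ((v.2 : ℂ) • K).IsHermitian := by
    unfold Matrix.IsHermitian
    rw [conjTranspose_smul, hK.eq, Complex.star_def, Complex.conj_ofReal]
  exact (Matrix.isHermitian_one.sub h1).sub h2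

lemma mat_cont : Continuous (mat H K) := by
  unfold mat
  exact (continuous_const.sub
      ((Complex.continuous_ofReal.comp continuous_fst).smul continuous_const)).sub
    ((Complex.continuous_ofReal.comp continuous_snd).smul continuous_const)

lemma mat_det_im (hH : H.IsHermitian) (hK : K.IsHermitian) (v : ℝ × ℝ) :
    ((mat H K v).det).im = 0 := by
  have h : star ((mat H K v).det) = (mat H K v).det := by
    conv_lhs => rw [← Matrix.det_conjTranspose, (mat_herm hH hK v).eq]
  rw [Complex.star_def, Complex.conj_eq_iff_im] at h
  exact h

lemma mat_smul_pt (v : ℝ × ℝ) (t : ℝ) :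
    mat H K (t • v) = (((1 - t : ℝ)) : ℂ) • (1 : Matrix (Fin d) (Fin d) ℂ)
      + (t : ℂ) • mat H K v := by
  unfold mat
  simp only [Prod.smul_fst, Prod.smul_snd, smul_eq_mul, smul_sub, smul_smul]
  push_cast
  module


lemma isClosed_S (hH : H.IsHermitian) (hK : K.IsHermitian) :
    IsClosed {v : ℝ × ℝ | (mat H K v).PosSemidef} := by
  have heq : {v : ℝ × ℝ | (mat H K v).PosSemidef} =
      ⋂ x : Fin d → ℂ, {v : ℝ × ℝ | 0 ≤ (quad (mat H K v) x).re} := by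
    ext v
    simp only [Set.mem_iInter, Set.mem_setOf_eq]
    exact posSemidef_iff_quad (mat_herm hH hK v)
  rw [heq]
  refine isClosed_iInter fun x => isClosed_le continuous_const ?_
  exact Complex.continuous_re.comp
    (continuous_const.dotProduct (mat_cont.matrix_mulVec continuous_const))

lemma isOpen_D (hH : H.IsHermitian) (hK : K.IsHermitian) :
    IsOpen {v : ℝ × ℝ | 0 < (mat H K v).det} := by
  have heq : {v : ℝ × ℝ | 0 < (mat H K v).det} =
      (fun v : ℝ × ℝ => ((mat H K v).det).re) ⁻¹' Set.Ioi 0 := by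
    ext v
    simp only [Set.mem_setOf_eq, Set.mem_preimage, Set.mem_Ioi]
    rw [Complex.pos_iff]
    exact ⟨fun h => h.1, fun h => ⟨h, (mat_det_im hH hK v).symm⟩⟩
  rw [heq]
  exact isOpen_Ioi.preimage (Complex.continuous_re.comp mat_cont.matrix_det)

lemma isOpen_P (hH : H.IsHermitian) (hK : K.IsHermitian) :
    IsOpen {v : ℝ × ℝ | (mat H K v).PosDef} := by
  rw [isOpen_iff_forall_mem_open]
  intro v₀ hv₀
  obtain ⟨ε, hε, hlb⟩ := posDef_lb hv₀
  set cH := ∑ i, ∑ j, ‖H i j‖ with hcH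
  set cK := ∑ i, ∑ j, ‖K i j‖ with hcK
  have hcH0 : 0 ≤ cH := Finset.sum_nonneg fun i _ => Finset.sum_nonneg fun j _ => norm_nonneg _
  have hcK0 : 0 ≤ cK := Finset.sum_nonneg fun i _ => Finset.sum_nonneg fun j _ => norm_nonneg _
  refine ⟨{v : ℝ × ℝ | |v.1 - v₀.1| * cH + |v.2 - v₀.2| * cK < ε}, ?_, ?_, by simp [hε]⟩
  · intro v hv
    simp only [Set.mem_setOf_eq] at hv ⊢
    have key : mat H K v = mat H K v₀ + (((v₀.1 - v.1 : ℝ)) : ℂ) • H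
        + (((v₀.2 - v.2 : ℝ)) : ℂ) • K := by
      unfold mat
      push_cast
      module
    rw [posDef_iff_quad (mat_herm hH hK v)]
    intro x hx
    have hre : (quad (mat H K v) x).re = (quad (mat H K v₀) x).re
        + (v₀.1 - v.1) * (quad H x).re + (v₀.2 - v.2) * (quad K x).re := by
      rw [key, quad_add, quad_add, quad_real_smul, quad_real_smul, Complex.add_re,
        Complex.add_re, Complex.re_ofReal_mul, Complex.re_ofReal_mul]
    have hbH : |(quad H x).re| ≤ cH * ‖x‖ ^ 2 := by
      refine (Complex.abs_re_le_norm _).trans ?_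
      exact quad_bound H x
    have hbK : |(quad K x).re| ≤ cK * ‖x‖ ^ 2 := by
      refine (Complex.abs_re_le_norm _).trans ?_
      exact quad_bound K x
    have h1 : |(v₀.1 - v.1) * (quad H x).re| ≤ (|v.1 - v₀.1| * cH) * ‖x‖ ^ 2 := by
      rw [abs_mul, abs_sub_comm, mul_assoc]
      exact mul_le_mul_of_nonneg_left hbH (abs_nonneg _)
    have h2 : |(v₀.2 - v.2) * (quad K x).re| ≤ (|v.2 - v₀.2| * cK) * ‖x‖ ^ 2 := by
      rw [abs_mul, abs_sub_comm, mul_assoc]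
      exact mul_le_mul_of_nonneg_left hbK (abs_nonneg _)
    have hlbx := hlb x
    have hxn : (0 : ℝ) < ‖x‖ := norm_pos_iff.mpr hx
    have hx2 : (0 : ℝ) < ‖x‖ ^ 2 := by positivity
    rw [hre]
    nlinarith [neg_abs_le ((v₀.1 - v.1) * (quad H x).re),
      neg_abs_le ((v₀.2 - v.2) * (quad K x).re)]
  · have hcont : Continuous fun v : ℝ × ℝ => |v.1 - v₀.1| * cH + |v.2 - v₀.2| * cK :=
      (((continuous_fst.sub continuous_const).abs).mul continuous_const).add
        (((continuous_snd.sub continuous_const).abs).mul continuous_const)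
    exact isOpen_lt hcont continuous_const


lemma mat_zero : mat H K ((0, 0) : ℝ × ℝ) = 1 := by
  simp [mat]

lemma mat_posDef_zero : (mat H K ((0, 0) : ℝ × ℝ)).PosDef := by
  rw [mat_zero]; exact Matrix.PosDef.one

lemma mat_smul_posDef {v : ℝ × ℝ} (hv : (mat H K v).PosSemidef) {t : ℝ} (h0 : 0 ≤ t)
    (h1 : t < 1) : (mat H K (t • v)).PosDef := by
  rw [mat_smul_pt]
  exact Matrix.PosDef.add_posSemidef
    (posDef_real_smul Matrix.PosDef.one (by linarith)) (posSemidef_real_smul hv h0)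

lemma preconnected_P (hH : H.IsHermitian) (hK : K.IsHermitian) :
    IsPreconnected {v : ℝ × ℝ | (mat H K v).PosDef} := by
  set P := {v : ℝ × ℝ | (mat H K v).PosDef} with hP
  have hseg : ∀ v ∈ P, segment ℝ ((0, 0) : ℝ × ℝ) v ⊆ P := by
    intro v hv w hw
    rw [segment_eq_image] at hw
    obtain ⟨t, ht, rfl⟩ := hw
    have hv' : (mat H K v).PosDef := hv
    show ((1 - t) • ((0, 0) : ℝ × ℝ) + t • v) ∈ P
    have heq : (1 - t) • ((0, 0) : ℝ × ℝ) + t • v = t • v := by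
      rw [Prod.mk_zero_zero, smul_zero, zero_add]
    rw [heq]
    show (mat H K (t • v)).PosDef
    rcases eq_or_lt_of_le ht.2 with h1 | h1
    · subst h1
      simpa [one_smul] using hv'
    · exact mat_smul_posDef hv'.posSemidef ht.1 h1
  have hunion : P = ⋃₀ ((fun v => segment ℝ ((0, 0) : ℝ × ℝ) v) '' P) := by
    ext w
    constructor
    · intro hw
      exact ⟨segment ℝ ((0, 0) : ℝ × ℝ) w, ⟨w, hw, rfl⟩, right_mem_segment _ _ _⟩
    · rintro ⟨s, ⟨v, hv, rfl⟩, hws⟩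
      exact hseg v hv hws
  rw [hunion]
  refine isPreconnected_sUnion ((0, 0) : ℝ × ℝ) _ ?_ ?_
  · rintro s ⟨v, hv, rfl⟩
    exact left_mem_segment _ _ _
  · rintro s ⟨v, hv, rfl⟩
    exact (convex_segment _ _).isPreconnected

lemma P_eq_component (hH : H.IsHermitian) (hK : K.IsHermitian) :
    {v : ℝ × ℝ | (mat H K v).PosDef} =
      connectedComponentIn {v : ℝ × ℝ | 0 < (mat H K v).det} ((0, 0) : ℝ × ℝ) := by
  set P := {v : ℝ × ℝ | (mat H K v).PosDef} with hPdef
  set D := {v : ℝ × ℝ | 0 < (mat H K v).det} with hDdef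
  have hPD : P ⊆ D := fun v hv => hv.det_pos
  have h0P : ((0, 0) : ℝ × ℝ) ∈ P := mat_posDef_zero
  apply Set.Subset.antisymm
  · exact (preconnected_P hH hK).subset_connectedComponentIn h0P hPD
  · set S := {v : ℝ × ℝ | (mat H K v).PosSemidef} with hSdef
    have hPS : P ⊆ S := fun v hv => hv.posSemidef
    refine IsPreconnected.subset_left_of_subset_union (isOpen_P hH hK)
      (isClosed_S hH hK).isOpen_compl ?_ ?_ ?_ isPreconnected_connectedComponentIn
    · rw [Set.disjoint_left]
      exact fun v hv hv' => hv' (hPS hv)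
    · intro u hu
      have huD : u ∈ D := connectedComponentIn_subset _ _ hu
      by_cases huS : u ∈ S
      · exact Or.inl (posDef_of_posSemidef_det_ne_zero huS (ne_of_gt huD))
      · exact Or.inr huS
    · exact ⟨(0, 0), mem_connectedComponentIn (hPD h0P), h0P⟩

lemma S_eq_closure_P (hH : H.IsHermitian) (hK : K.IsHermitian) :
    {v : ℝ × ℝ | (mat H K v).PosSemidef} =
      closure {v : ℝ × ℝ | (mat H K v).PosDef} := by
  apply Set.Subset.antisymm
  · intro v hv
    have htend : Filter.Tendsto (fun n : ℕ => (1 - 1 / (n + 1 : ℝ)) • v) Filter.atTop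
        (nhds v) := by
      have h1 : Filter.Tendsto (fun n : ℕ => (1 - 1 / (n + 1 : ℝ))) Filter.atTop
          (nhds 1) := by
        simpa using (tendsto_const_nhds (x := (1 : ℝ))).sub tendsto_one_div_add_atTop_nhds_zero_nat
      simpa using h1.smul_const v
    refine mem_closure_of_tendsto htend (Filter.Eventually.of_forall fun n => ?_)
    have h0 : (0 : ℝ) ≤ 1 - 1 / (n + 1 : ℝ) := by
      have : 1 / (n + 1 : ℝ) ≤ 1 := by
        rw [div_le_one (by positivity)]
        simp
      linarith
    have h1 : 1 - 1 / (n + 1 : ℝ) < 1 := by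
      have : 0 < 1 / (n + 1 : ℝ) := by positivity
      linarith
    exact mat_smul_posDef hv h0 h1
  · exact closure_minimal (fun v hv => hv.posSemidef) (isClosed_S hH hK)

end SpectraAux

/-- For hermitian `H, K`, the spectrahedron
`{(ξ, η) ∈ ℝ² : I - ξH - ηK ⪰ 0}` equals the closure of the connected component
of the origin of `{(ξ, η) : det(I - ξH - ηK) > 0}` (the determinant being real
since the matrix is hermitian; `0 < det` is in the complex order). -/
theorem spectrahedron_eq_closure_connectedComponent {d : ℕ}
    (H K : Matrix (Fin d) (Fin d) ℂ) (hH : H.IsHermitian) (hK : K.IsHermitian) :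
    {v : ℝ × ℝ |
        ((1 : Matrix (Fin d) (Fin d) ℂ) - (v.1 : ℂ) • H - (v.2 : ℂ) • K).PosSemidef} =
      closure (connectedComponentIn
        {v : ℝ × ℝ |
          0 < ((1 : Matrix (Fin d) (Fin d) ℂ) - (v.1 : ℂ) • H - (v.2 : ℂ) • K).det}
        (0, 0)) := by
  show {v : ℝ × ℝ | (SpectraAux.mat H K v).PosSemidef} =
      closure (connectedComponentIn
        {v : ℝ × ℝ | 0 < (SpectraAux.mat H K v).det} ((0, 0) : ℝ × ℝ))
  rw [← SpectraAux.P_eq_component hH hK]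
  exact SpectraAux.S_eq_closure_P hH hK
end

section
/- Let A be a d×d complex matrix. Then the polar of the numerical range W(A) is rigidly convex of degree at most d: explicitly, writing A = H + iK with H, K hermitian, the polar W(A)_* is a convex set equal to the closure of the connected component containing the origin of {(ξ, η) ∈ ℝ² : q(ξ, η) > 0}, where q(ξ, η) = det(I − ξH − ηK) is a real zero polynomial of degree at most d with q(0,0) = 1. -/
open Matrix
open scoped ComplexOrder

/-- A real polynomial in two variables is a real zero (RZ) polynomial if it is
positive at the origin and for every `(x, y) ∈ ℝ²` and `μ ∈ ℂ`,
`q(μx, μy) = 0` implies `μ ∈ ℝ`. -/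
def IsRZPolynomial (q : MvPolynomial (Fin 2) ℝ) : Prop :=
  0 < MvPolynomial.eval ![0, 0] q ∧
  ∀ (x y : ℝ) (μ : ℂ),
    MvPolynomial.eval ![μ * (x : ℂ), μ * (y : ℂ)]
      (MvPolynomial.map (algebraMap ℝ ℂ) q) = 0 → μ.im = 0

open MvPolynomial

namespace PolarNR

variable {d : ℕ}

/-- The pencil `1 - ξH - ηK`. -/
noncomputable def MM (H K : Matrix (Fin d) (Fin d) ℂ) (ξ η : ℝ) : Matrix (Fin d) (Fin d) ℂ :=
  (1 : Matrix (Fin d) (Fin d) ℂ) - (ξ : ℂ) • H - (η : ℂ) • K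

lemma herm_conj {N : Matrix (Fin d) (Fin d) ℂ} (hN : N.IsHermitian) (v : Fin d → ℂ) :
    (starRingEnd ℂ) (star v ⬝ᵥ N *ᵥ v) = star v ⬝ᵥ N *ᵥ v := by
  have h1 : star v ⬝ᵥ (N *ᵥ v) = star (star (N *ᵥ v) ⬝ᵥ v) := star_dotProduct _ _
  rw [starRingEnd_apply]
  calc star (star v ⬝ᵥ N *ᵥ v) = star (N *ᵥ v) ⬝ᵥ v := by rw [h1, star_star]
    _ = star v ᵥ* Nᴴ ⬝ᵥ v := by rw [star_mulVec]
    _ = star v ⬝ᵥ N *ᵥ v := by rw [hN.eq, ← dotProduct_mulVec]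

lemma herm_im {N : Matrix (Fin d) (Fin d) ℂ} (hN : N.IsHermitian) (v : Fin d → ℂ) :
    (star v ⬝ᵥ N *ᵥ v).im = 0 :=
  Complex.conj_eq_iff_im.mp (herm_conj hN v)

lemma posSemidef_of_re {N : Matrix (Fin d) (Fin d) ℂ} (hN : N.IsHermitian)
    (h : ∀ x : Fin d → ℂ, 0 ≤ (star x ⬝ᵥ N *ᵥ x).re) : N.PosSemidef := by
  refine posSemidef_iff_dotProduct_mulVec.mpr ⟨hN, fun x => ?_⟩
  rw [Complex.le_def]
  exact ⟨by simpa using h x, by simp [herm_im hN x]⟩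

lemma posDef_of_re {N : Matrix (Fin d) (Fin d) ℂ} (hN : N.IsHermitian)
    (h : ∀ x : Fin d → ℂ, x ≠ 0 → 0 < (star x ⬝ᵥ N *ᵥ x).re) : N.PosDef := by
  refine posDef_iff_dotProduct_mulVec.mpr ⟨hN, fun x hx => ?_⟩
  rw [Complex.lt_def]
  exact ⟨by simpa using h x hx, by simp [herm_im hN x]⟩


lemma quad_real_smul (N : Matrix (Fin d) (Fin d) ℂ) (r : ℝ) (u : Fin d → ℂ) :
    star ((r : ℂ) • u) ⬝ᵥ N *ᵥ ((r : ℂ) • u) = ((r ^ 2 : ℝ) : ℂ) * (star u ⬝ᵥ N *ᵥ u) := by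
  rw [star_smul, smul_dotProduct, mulVec_smul, dotProduct_smul]
  simp [smul_eq_mul]
  push_cast
  ring

lemma smulPD {N : Matrix (Fin d) (Fin d) ℂ} {r : ℝ} (hr : 0 < r) (hN : N.PosDef) :
    ((r : ℂ) • N).PosDef := by
  refine posDef_of_re ?_ fun x hx => ?_
  · unfold Matrix.IsHermitian
    rw [conjTranspose_smul, hN.isHermitian.eq]
    norm_num
  · rw [smul_mulVec, dotProduct_smul, smul_eq_mul, Complex.re_ofReal_mul]
    exact mul_pos hr (by simpa using (Complex.lt_def.mp (hN.dotProduct_mulVec_pos hx)).1)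

lemma smulPSD {N : Matrix (Fin d) (Fin d) ℂ} {r : ℝ} (hr : 0 ≤ r) (hN : N.PosSemidef) :
    ((r : ℂ) • N).PosSemidef := by
  refine posSemidef_of_re ?_ fun x => ?_
  · unfold Matrix.IsHermitian
    rw [conjTranspose_smul, hN.isHermitian.eq]
    norm_num
  · rw [smul_mulVec, dotProduct_smul, smul_eq_mul, Complex.re_ofReal_mul]
    exact mul_nonneg hr (by simpa using (Complex.le_def.mp (hN.dotProduct_mulVec_nonneg x)).1)

section MM

variable {H K : Matrix (Fin d) (Fin d) ℂ}

lemma herm_MM (hH : H.IsHermitian) (hK : K.IsHermitian) (ξ η : ℝ) :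
    (MM H K ξ η).IsHermitian := by
  unfold Matrix.IsHermitian MM
  rw [conjTranspose_sub, conjTranspose_sub, conjTranspose_smul, conjTranspose_smul,
    conjTranspose_one, hH.eq, hK.eq]
  norm_num

lemma MM_zero : MM H K 0 0 = 1 := by simp [MM]

lemma MM_affine {a b : ℝ} (hab : a + b = 1) (ξ₁ η₁ ξ₂ η₂ : ℝ) :
    MM H K (a * ξ₁ + b * ξ₂) (a * η₁ + b * η₂) =
      (a : ℂ) • MM H K ξ₁ η₁ + (b : ℂ) • MM H K ξ₂ η₂ := by
  have hab' : (a : ℂ) + (b : ℂ) = 1 := by exact_mod_cast congrArg (Complex.ofReal) hab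
  ext i j
  by_cases h : i = j
  · simp only [MM, Matrix.sub_apply, Matrix.smul_apply, Matrix.add_apply, Matrix.one_apply, h,
      if_true, smul_eq_mul]
    push_cast
    linear_combination -hab'
  · simp only [MM, Matrix.sub_apply, Matrix.smul_apply, Matrix.add_apply, Matrix.one_apply, h,
      if_false, smul_eq_mul]
    push_cast
    ring

lemma MM_segment (t ξ η : ℝ) :
    MM H K (t * ξ) (t * η) = ((1 - t : ℝ) : ℂ) • 1 + (t : ℂ) • MM H K ξ η := by
  ext i j
  by_cases h : i = j <;>
    simp [MM, Matrix.sub_apply, Matrix.smul_apply, Matrix.add_apply, Matrix.one_apply, h,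
      smul_eq_mul] <;> push_cast <;> ring

end MM


section Poly

variable (H K : Matrix (Fin d) (Fin d) ℂ)

noncomputable def NP : Matrix (Fin d) (Fin d) (MvPolynomial (Fin 2) ℂ) :=
  Matrix.of fun i j => (if i = j then 1 else 0) - X 0 * C (H i j) - X 1 * C (K i j)

noncomputable def qC : MvPolynomial (Fin 2) ℂ := (NP H K).det

lemma eval_qC (v : Fin 2 → ℂ) :
    eval v (qC H K) = ((1 : Matrix (Fin d) (Fin d) ℂ) - v 0 • H - v 1 • K).det := by
  rw [qC, RingHom.map_det]
  congr 1
  ext i j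
  simp [NP, Matrix.map_apply, Matrix.sub_apply, Matrix.smul_apply, Matrix.one_apply,
    apply_ite (eval v), smul_eq_mul]

lemma conj_qC (hH : H.IsHermitian) (hK : K.IsHermitian) :
    MvPolynomial.map (starRingEnd ℂ) (qC H K) = qC H K := by
  have hh : ∀ i j, (starRingEnd ℂ) (H i j) = H j i := fun i j => by
    rw [starRingEnd_apply, ← conjTranspose_apply, hH.eq]
  have hk : ∀ i j, (starRingEnd ℂ) (K i j) = K j i := fun i j => by
    rw [starRingEnd_apply, ← conjTranspose_apply, hK.eq]
  rw [qC, RingHom.map_det]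
  have e : (NP H K).map (MvPolynomial.map (starRingEnd ℂ)) = (NP H K)ᵀ := by
    ext i j
    simp [NP, Matrix.map_apply, Matrix.transpose_apply, apply_ite (MvPolynomial.map
      (starRingEnd ℂ)), hh, hk, eq_comm]
  rw [RingHom.mapMatrix_apply, e, det_transpose]

lemma im_coeff_qC (hH : H.IsHermitian) (hK : K.IsHermitian) (m : Fin 2 →₀ ℕ) :
    ((qC H K).coeff m).im = 0 := by
  have h := congrArg (coeff m) (conj_qC H K hH hK)
  rw [coeff_map] at h
  exact Complex.conj_eq_iff_im.mp h

noncomputable def qR : MvPolynomial (Fin 2) ℝ :=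
  ∑ m ∈ (qC H K).support, monomial m (((qC H K).coeff m).re)

lemma map_qR (hH : H.IsHermitian) (hK : K.IsHermitian) :
    MvPolynomial.map (algebraMap ℝ ℂ) (qR H K) = qC H K := by
  rw [qR, map_sum]
  conv_rhs => rw [(qC H K).as_sum]
  refine Finset.sum_congr rfl fun m hm => ?_
  rw [map_monomial]
  congr 1
  apply Complex.ext <;> simp [im_coeff_qC H K hH hK m]

lemma deg_qC : (qC H K).totalDegree ≤ d := by
  rw [qC, det_apply]
  refine (totalDegree_finset_sum _ _).trans (Finset.sup_le fun σ _ => ?_)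
  have hsmul : Equiv.Perm.sign σ • ∏ i, NP H K (σ i) i =
      ((Equiv.Perm.sign σ : ℤ) : ℂ) • ∏ i, NP H K (σ i) i := by
    rw [Units.smul_def, Int.cast_smul_eq_zsmul]
  rw [hsmul]
  refine (totalDegree_smul_le _ _).trans ?_
  refine (totalDegree_finset_prod _ _).trans ?_
  have hent : ∀ i : Fin d, (NP H K (σ i) i).totalDegree ≤ 1 := by
    intro i
    have e1 : NP H K (σ i) i = ((if σ i = i then (1 : MvPolynomial (Fin 2) ℂ) else 0) +
        (-1 : ℂ) • (X 0 * C (H (σ i) i))) + (-1 : ℂ) • (X 1 * C (K (σ i) i)) := by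
      simp [NP, sub_eq_add_neg, neg_one_smul]
    rw [e1]
    have hX : ∀ (k : Fin 2) (c : ℂ), (X k * C c : MvPolynomial (Fin 2) ℂ).totalDegree ≤ 1 := by
      intro k c
      refine (totalDegree_mul _ _).trans ?_
      simp [totalDegree_X, totalDegree_C]
    refine (totalDegree_add _ _).trans (max_le ((totalDegree_add _ _).trans (max_le ?_
      ((totalDegree_smul_le _ _).trans (hX 0 _)))) ((totalDegree_smul_le _ _).trans (hX 1 _)))
    split <;> simp [totalDegree_one]
  calc (∑ i : Fin d, (NP H K (σ i) i).totalDegree) ≤ ∑ _i : Fin d, 1 :=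
        Finset.sum_le_sum fun i _ => hent i
    _ = d := by simp

lemma deg_qR : (qR H K).totalDegree ≤ d := by
  refine (totalDegree_finset_sum _ _).trans (Finset.sup_le fun m hm => ?_)
  exact le_trans (totalDegree_monomial_le _ _) (le_trans (le_totalDegree hm) (deg_qC H K))

lemma eval_qR (hH : H.IsHermitian) (hK : K.IsHermitian) (ξ η : ℝ) :
    ((eval ![ξ, η] (qR H K) : ℝ) : ℂ) =
      ((1 : Matrix (Fin d) (Fin d) ℂ) - (ξ : ℂ) • H - (η : ℂ) • K).det := by
  have h1 : ((eval ![ξ, η] (qR H K) : ℝ) : ℂ) =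
      eval ![(ξ : ℂ), (η : ℂ)] (MvPolynomial.map (algebraMap ℝ ℂ) (qR H K)) := by
    rw [eval_map]
    have h2 : (algebraMap ℝ ℂ) (eval ![ξ, η] (qR H K)) =
        eval₂ ((algebraMap ℝ ℂ).comp (RingHom.id ℝ)) (fun i => (algebraMap ℝ ℂ) (![ξ, η] i))
          (qR H K) := eval₂_comp_left _ _ _ _
    rw [RingHomCompTriple.comp_eq] at h2
    rw [show ((eval ![ξ, η] (qR H K) : ℝ) : ℂ) = (algebraMap ℝ ℂ) (eval ![ξ, η] (qR H K)) from rfl,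
      h2]
    congr 1
    funext i
    fin_cases i <;> simp
  rw [h1, map_qR H K hH hK, eval_qC]
  norm_num

end Poly


section Main

variable {H K : Matrix (Fin d) (Fin d) ℂ}

lemma eval00_qR (hH : H.IsHermitian) (hK : K.IsHermitian) :
    eval ![0, 0] (qR H K) = 1 := by
  have h := eval_qR H K hH hK 0 0
  simp only [Complex.ofReal_zero, zero_smul, sub_zero, det_one] at h
  exact_mod_cast h

lemma rz_qR (hH : H.IsHermitian) (hK : K.IsHermitian) : IsRZPolynomial (qR H K) := by
  constructor
  · rw [eval00_qR hH hK]; norm_num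
  · intro x y μ hz
    rw [map_qR H K hH hK, eval_qC] at hz
    simp only [Matrix.cons_val_zero, Matrix.cons_val_one, Matrix.head_cons] at hz
    set N₀ : Matrix (Fin d) (Fin d) ℂ := (x : ℂ) • H + (y : ℂ) • K with hN₀
    have hmat : (1 : Matrix (Fin d) (Fin d) ℂ) - (μ * (x : ℂ)) • H - (μ * (y : ℂ)) • K =
        1 - μ • N₀ := by
      rw [hN₀, smul_add, smul_smul, smul_smul, sub_sub]
    rw [hmat] at hz
    have hN0herm : N₀.IsHermitian := by
      unfold Matrix.IsHermitian
      rw [hN₀, conjTranspose_add, conjTranspose_smul, conjTranspose_smul, hH.eq, hK.eq]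
      simp [Complex.star_def, Complex.conj_ofReal]
    obtain ⟨v, hv0, hveq⟩ := (Matrix.exists_mulVec_eq_zero_iff).mpr hz
    have hveq' : v = μ • (N₀ *ᵥ v) := by
      have h2 := hveq
      rw [sub_mulVec, one_mulVec, smul_mulVec, sub_eq_zero] at h2
      exact h2
    have hab : star v ⬝ᵥ v = μ * (star v ⬝ᵥ N₀ *ᵥ v) := by
      calc star v ⬝ᵥ v = star v ⬝ᵥ (μ • (N₀ *ᵥ v)) := by rw [← hveq']
        _ = μ * (star v ⬝ᵥ N₀ *ᵥ v) := by rw [dotProduct_smul, smul_eq_mul]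
    have hapos : 0 < star v ⬝ᵥ v := dotProduct_star_self_pos_iff.mpr hv0
    have haim : (star v ⬝ᵥ v).im = 0 := ((Complex.lt_def.mp hapos).2).symm
    have hbim : (star v ⬝ᵥ N₀ *ᵥ v).im = 0 := herm_im hN0herm v
    have hbne : star v ⬝ᵥ N₀ *ᵥ v ≠ 0 := by
      intro h0
      rw [h0, mul_zero] at hab
      exact hapos.ne' hab
    have hbre : (star v ⬝ᵥ N₀ *ᵥ v).re ≠ 0 := fun h0 => hbne (Complex.ext h0 hbim)
    have him : (star v ⬝ᵥ v).im = μ.im * (star v ⬝ᵥ N₀ *ᵥ v).re := by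
      rw [hab, Complex.mul_im, hbim]; ring
    rw [haim] at him
    rcases mul_eq_zero.mp him.symm with h | h
    · exact h
    · exact absurd h hbre


lemma re_conj_mul (z w : ℂ) : ((starRingEnd ℂ) z * w).re = z.re * w.re + z.im * w.im := by
  simp [Complex.mul_re]

lemma w_decomp {A : Matrix (Fin d) (Fin d) ℂ} (hA : A = H + Complex.I • K) (x : Fin d → ℂ) :
    star x ⬝ᵥ A *ᵥ x = star x ⬝ᵥ H *ᵥ x + Complex.I * (star x ⬝ᵥ K *ᵥ x) := by
  rw [hA, add_mulVec, smul_mulVec, dotProduct_add, dotProduct_smul, smul_eq_mul]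

lemma quad_MM (ξ η : ℝ) (x : Fin d → ℂ) :
    star x ⬝ᵥ (MM H K ξ η) *ᵥ x =
      star x ⬝ᵥ x - (ξ : ℂ) * (star x ⬝ᵥ H *ᵥ x) - (η : ℂ) * (star x ⬝ᵥ K *ᵥ x) := by
  rw [MM, sub_mulVec, sub_mulVec, one_mulVec, smul_mulVec, smul_mulVec,
    dotProduct_sub, dotProduct_sub, dotProduct_smul, dotProduct_smul, smul_eq_mul, smul_eq_mul]

lemma re_quad_MM (hH : H.IsHermitian) (hK : K.IsHermitian) (ξ η : ℝ) (x : Fin d → ℂ) :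
    (star x ⬝ᵥ (MM H K ξ η) *ᵥ x).re =
      (star x ⬝ᵥ x).re - ξ * (star x ⬝ᵥ H *ᵥ x).re - η * (star x ⬝ᵥ K *ᵥ x).re := by
  rw [quad_MM]
  simp [Complex.sub_re, Complex.mul_re, herm_im hH x, herm_im hK x]

lemma polar_eq_PSD {A : Matrix (Fin d) (Fin d) ℂ} (hH : H.IsHermitian) (hK : K.IsHermitian)
    (hA : A = H + Complex.I • K) :
    polarSet (numericalRange A) = {z : ℂ | (MM H K z.re z.im).PosSemidef} := by
  have hre : ∀ (z : ℂ) (x : Fin d → ℂ),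
      ((starRingEnd ℂ) z * (star x ⬝ᵥ A *ᵥ x)).re =
        z.re * (star x ⬝ᵥ H *ᵥ x).re + z.im * (star x ⬝ᵥ K *ᵥ x).re := by
    intro z x
    rw [re_conj_mul, w_decomp hA]
    simp [Complex.add_re, Complex.add_im, Complex.mul_re, Complex.mul_im,
      herm_im hH x, herm_im hK x]
  ext z
  constructor
  · intro hz
    refine posSemidef_of_re (herm_MM hH hK _ _) fun x => ?_
    rcases eq_or_ne x 0 with rfl | hx
    · simp
    · have hxa : 0 < star x ⬝ᵥ x := dotProduct_star_self_pos_iff.mpr hx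
      have hxare : 0 < (star x ⬝ᵥ x).re := by simpa using (Complex.lt_def.mp hxa).1
      have hxaim : (star x ⬝ᵥ x).im = 0 := ((Complex.lt_def.mp hxa).2).symm
      set r : ℝ := Real.sqrt ((star x ⬝ᵥ x).re) with hr
      have hrpos : 0 < r := Real.sqrt_pos.mpr hxare
      have hrsq : r ^ 2 = (star x ⬝ᵥ x).re := Real.sq_sqrt hxare.le
      set u : Fin d → ℂ := ((r⁻¹ : ℝ) : ℂ) • x with hu
      have hxu : x = ((r : ℝ) : ℂ) • u := by
        rw [hu, smul_smul, ← Complex.ofReal_mul, mul_inv_cancel₀ hrpos.ne', Complex.ofReal_one,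
          one_smul]
      have haval : star x ⬝ᵥ x = ((r ^ 2 : ℝ) : ℂ) := by
        apply Complex.ext <;> simp [hxaim, hrsq]
      have huu : star u ⬝ᵥ u = 1 := by
        rw [hu, star_smul, smul_dotProduct, dotProduct_smul, haval]
        simp [smul_eq_mul, Complex.star_def, Complex.conj_ofReal]
        push_cast
        field_simp
      have hineq := hz _ ⟨u, huu, rfl⟩
      rw [hre z u] at hineq
      have hQu : 0 ≤ (star u ⬝ᵥ (MM H K z.re z.im) *ᵥ u).re := by
        rw [re_quad_MM hH hK]
        have : (star u ⬝ᵥ u).re = 1 := by rw [huu]; simp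
        rw [this]
        linarith
      have hQx : (star x ⬝ᵥ (MM H K z.re z.im) *ᵥ x).re =
          r ^ 2 * (star u ⬝ᵥ (MM H K z.re z.im) *ᵥ u).re := by
        rw [hxu, quad_real_smul, Complex.re_ofReal_mul]
      rw [hQx]
      positivity
  · intro hz w hw
    obtain ⟨x, hx1, rfl⟩ := hw
    have h0 : 0 ≤ (star x ⬝ᵥ MM H K z.re z.im *ᵥ x).re := by
      simpa using (Complex.le_def.mp (hz.dotProduct_mulVec_nonneg x)).1
    rw [re_quad_MM hH hK] at h0
    have hx1re : (star x ⬝ᵥ x).re = 1 := by rw [hx1]; simp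
    rw [hre z x]
    rw [hx1re] at h0
    linarith


lemma posDef_of_posSemidef_det_ne_zero {N : Matrix (Fin d) (Fin d) ℂ} (hN : N.PosSemidef)
    (hdet : N.det ≠ 0) : N.PosDef := by
  have hherm := hN.isHermitian
  obtain ⟨B, rfl⟩ : ∃ B : Matrix (Fin d) (Fin d) ℂ, N = Bᴴ * B := by
    open scoped MatrixOrder Matrix.Norms.L2Operator in
    exact CStarAlgebra.nonneg_iff_eq_star_mul_self.mp hN.nonneg
  refine posDef_iff_dotProduct_mulVec.mpr ⟨hherm, fun x hx => ?_⟩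
  have hBdet : B.det ≠ 0 := by
    intro h
    apply hdet
    rw [det_mul, det_conjTranspose, h]
    simp
  have hBx : B *ᵥ x ≠ 0 := by
    intro h
    exact hBdet (Matrix.exists_mulVec_eq_zero_iff.mp ⟨x, hx, h⟩)
  have e : star x ⬝ᵥ (Bᴴ * B) *ᵥ x = star (B *ᵥ x) ⬝ᵥ (B *ᵥ x) := by
    rw [← mulVec_mulVec, dotProduct_mulVec, ← star_mulVec]
  rw [e]
  exact dotProduct_star_self_pos_iff.mpr hBx

lemma psd_mem_nhds (hH : H.IsHermitian) (hK : K.IsHermitian) {z : ℂ}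
    (hz : (MM H K z.re z.im).PosDef) :
    {w : ℂ | (MM H K w.re w.im).PosSemidef} ∈ nhds z := by
  have hcont : Continuous fun p : ℂ × (Fin d → ℂ) =>
      (star p.2 ⬝ᵥ (MM H K p.1.re p.1.im) *ᵥ p.2).re := by
    apply Complex.continuous_re.comp
    simp only [dotProduct, mulVec, MM, Matrix.sub_apply, Matrix.smul_apply, Matrix.one_apply,
      smul_eq_mul, Pi.star_apply]
    apply continuous_finset_sum
    intro i _
    apply Continuous.mul
    · exact continuous_star.comp ((continuous_apply i).comp continuous_snd)
    · apply continuous_finset_sum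
      intro j _
      refine Continuous.mul (Continuous.sub (Continuous.sub continuous_const ?_) ?_)
        ((continuous_apply j).comp continuous_snd)
      · exact (Complex.continuous_ofReal.comp (Complex.continuous_re.comp continuous_fst)).mul
          continuous_const
      · exact (Complex.continuous_ofReal.comp (Complex.continuous_im.comp continuous_fst)).mul
          continuous_const
  have hO : IsOpen {p : ℂ × (Fin d → ℂ) |
      0 < (star p.2 ⬝ᵥ (MM H K p.1.re p.1.im) *ᵥ p.2).re} :=
    isOpen_lt continuous_const hcont
  have hsub : ({z} : Set ℂ) ×ˢ Metric.sphere (0 : Fin d → ℂ) 1 ⊆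
      {p : ℂ × (Fin d → ℂ) | 0 < (star p.2 ⬝ᵥ (MM H K p.1.re p.1.im) *ᵥ p.2).re} := by
    rintro ⟨z', x⟩ ⟨hz', hx⟩
    rcases Set.mem_singleton_iff.mp hz' with rfl
    have hxn : ‖x‖ = 1 := mem_sphere_zero_iff_norm.mp hx
    have hxne : x ≠ 0 := by
      intro h
      rw [h, norm_zero] at hxn
      norm_num at hxn
    simpa using (Complex.lt_def.mp (hz.dotProduct_mulVec_pos hxne)).1
  obtain ⟨u, v, hu, hv, hzu, hsv, huv⟩ := generalized_tube_lemma isCompact_singleton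
    (isCompact_sphere (0 : Fin d → ℂ) 1) hO hsub
  refine Filter.mem_of_superset (hu.mem_nhds (hzu rfl)) fun z' hz' => ?_
  refine posSemidef_of_re (herm_MM hH hK _ _) fun x => ?_
  rcases eq_or_ne x 0 with rfl | hx
  · simp
  · set w : Fin d → ℂ := ((‖x‖⁻¹ : ℝ) : ℂ) • x with hwdef
    have hwn : ‖w‖ = 1 := by
      rw [hwdef, norm_smul, Complex.norm_real, norm_inv, norm_norm]
      exact inv_mul_cancel₀ (norm_ne_zero_iff.mpr hx)
    have hwmem : w ∈ Metric.sphere (0 : Fin d → ℂ) 1 := mem_sphere_zero_iff_norm.mpr hwn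
    have hpos : 0 < (star w ⬝ᵥ (MM H K z'.re z'.im) *ᵥ w).re :=
      huv (Set.mk_mem_prod hz' (hsv hwmem))
    have hxw : x = ((‖x‖ : ℝ) : ℂ) • w := by
      rw [hwdef, smul_smul, ← Complex.ofReal_mul, mul_inv_cancel₀ (norm_ne_zero_iff.mpr hx),
        Complex.ofReal_one, one_smul]
    rw [hxw, quad_real_smul, Complex.re_ofReal_mul]
    positivity


lemma convex_polarSet (S : Set ℂ) : Convex ℝ (polarSet S) := by
  intro z₁ h1 z₂ h2 a b ha hb hab w hw
  have e : (starRingEnd ℂ) (a • z₁ + b • z₂) * w =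
      ((a : ℝ) : ℂ) * ((starRingEnd ℂ) z₁ * w) + ((b : ℝ) : ℂ) * ((starRingEnd ℂ) z₂ * w) := by
    rw [show (a • z₁ : ℂ) = ((a : ℝ) : ℂ) * z₁ from Complex.real_smul,
      show (b • z₂ : ℂ) = ((b : ℝ) : ℂ) * z₂ from Complex.real_smul, map_add,
      _root_.map_mul, _root_.map_mul, Complex.conj_ofReal, Complex.conj_ofReal]
    ring
  rw [e, Complex.add_re, Complex.re_ofReal_mul, Complex.re_ofReal_mul]
  calc a * ((starRingEnd ℂ) z₁ * w).re + b * ((starRingEnd ℂ) z₂ * w).re ≤ a * 1 + b * 1 :=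
        add_le_add (mul_le_mul_of_nonneg_left (h1 w hw) ha)
          (mul_le_mul_of_nonneg_left (h2 w hw) hb)
    _ = 1 := by rw [mul_one, mul_one, hab]

lemma isClosed_polarSet (S : Set ℂ) : IsClosed (polarSet S) := by
  have e : polarSet S = ⋂ w ∈ S, {z : ℂ | ((starRingEnd ℂ) z * w).re ≤ 1} := by
    ext z
    simp [polarSet, Set.mem_iInter₂]
  rw [e]
  refine isClosed_biInter fun w hw => isClosed_le ?_ continuous_const
  exact Complex.continuous_re.comp (Complex.continuous_conj.mul continuous_const)

lemma eval_qR_z (hH : H.IsHermitian) (hK : K.IsHermitian) (z : ℂ) :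
    ((eval ![z.re, z.im] (qR H K) : ℝ) : ℂ) = (MM H K z.re z.im).det :=
  eval_qR H K hH hK z.re z.im

lemma set_eq_closure (hH : H.IsHermitian) (hK : K.IsHermitian) :
    {z : ℂ | (MM H K z.re z.im).PosSemidef} =
      closure (connectedComponentIn
        {z : ℂ | 0 < eval ![z.re, z.im] (qR H K)} 0) := by
  set U : Set ℂ := {z : ℂ | 0 < eval ![z.re, z.im] (qR H K)} with hU
  set P : Set ℂ := {z : ℂ | (MM H K z.re z.im).PosDef} with hP
  set S : Set ℂ := {z : ℂ | (MM H K z.re z.im).PosSemidef} with hS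
  have hdet : ∀ z : ℂ, ((eval ![z.re, z.im] (qR H K) : ℝ) : ℂ) = (MM H K z.re z.im).det :=
    eval_qR_z hH hK
  have hPU : P ⊆ U := by
    intro z hz
    have h1 : 0 < (MM H K z.re z.im).det := Matrix.PosDef.det_pos hz
    have h2 : (0 : ℝ) < (MM H K z.re z.im).det.re := by simpa using (Complex.lt_def.mp h1).1
    have h3 : (MM H K z.re z.im).det.re = eval ![z.re, z.im] (qR H K) := by
      rw [← hdet z, Complex.ofReal_re]
    rw [hU]
    simp only [Set.mem_setOf_eq]
    rw [← h3]
    exact h2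
  have hdetne : ∀ z ∈ U, (MM H K z.re z.im).det ≠ 0 := by
    intro z hz
    rw [← hdet z]
    exact_mod_cast (ne_of_gt hz)
  have hUS_P : ∀ z ∈ U, z ∈ S → z ∈ P := fun z hzU hzS =>
    posDef_of_posSemidef_det_ne_zero hzS (hdetne z hzU)
  have h0P : (0 : ℂ) ∈ P := by
    rw [hP]
    simp only [Set.mem_setOf_eq, Complex.zero_re, Complex.zero_im, MM_zero]
    exact Matrix.PosDef.one
  have hPconv : Convex ℝ P := by
    intro z₁ h1 z₂ h2 a b ha hb hab
    have hre : (a • z₁ + b • z₂ : ℂ).re = a * z₁.re + b * z₂.re := by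
      simp [Complex.add_re, Complex.real_smul]
    have him : (a • z₁ + b • z₂ : ℂ).im = a * z₁.im + b * z₂.im := by
      simp [Complex.add_im, Complex.real_smul]
    simp only [hP, Set.mem_setOf_eq] at h1 h2 ⊢
    rw [hre, him, MM_affine hab]
    rcases eq_or_lt_of_le ha with rfl | ha'
    · have hb1 : b = 1 := by linarith
      simp [hb1, h2]
    · rcases eq_or_lt_of_le hb with rfl | hb'
      · have ha1 : a = 1 := by linarith
        simp [ha1, h1]
      · exact (smulPD ha' h1).add (smulPD hb' h2)
  have hPC : P ⊆ connectedComponentIn U 0 :=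
    hPconv.isPreconnected.subset_connectedComponentIn h0P hPU
  have hSclosed : IsClosed S := by
    have he := polar_eq_PSD hH hK (rfl : H + Complex.I • K = H + Complex.I • K)
    rw [hS, ← he]
    exact isClosed_polarSet _
  -- C ⊆ S via clopen argument
  have hCS : connectedComponentIn U 0 ⊆ S := by
    set C := connectedComponentIn U 0 with hC
    have hCU : C ⊆ U := connectedComponentIn_subset U 0
    have hCsub : C ⊆ interior S ∪ Sᶜ := by
      intro z hzC
      rcases Classical.em (z ∈ S) with hzS | hzS
      · left
        have hzP : z ∈ P := hUS_P z (hCU hzC) hzS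
        exact mem_interior_iff_mem_nhds.mpr (psd_mem_nhds hH hK hzP)
      · right; exact hzS
    have h0U : (0 : ℂ) ∈ U := hPU h0P
    have h0C : (0 : ℂ) ∈ C := mem_connectedComponentIn h0U
    have h0int : (0 : ℂ) ∈ interior S := mem_interior_iff_mem_nhds.mpr (psd_mem_nhds hH hK h0P)
    have hdisj : Disjoint (interior S) Sᶜ :=
      disjoint_compl_right.mono_left interior_subset
    have := IsPreconnected.subset_left_of_subset_union isOpen_interior hSclosed.isOpen_compl
      hdisj hCsub ⟨0, h0C, h0int⟩ isPreconnected_connectedComponentIn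
    exact this.trans interior_subset
  -- S ⊆ closure P
  have hSP : S ⊆ closure P := by
    intro z hz
    have hseq : Filter.Tendsto (fun n : ℕ => ((1 - 1 / (n + 1) : ℝ)) • z) Filter.atTop (nhds z) := by
      have h1 : Filter.Tendsto (fun n : ℕ => (1 - 1 / (n + 1) : ℝ)) Filter.atTop (nhds 1) := by
        have := tendsto_one_div_add_atTop_nhds_zero_nat (𝕜 := ℝ)
        have h2 := Filter.Tendsto.const_sub (1 : ℝ) this
        simpa using h2
      have h3 := h1.smul_const z
      simpa using h3
    refine mem_closure_of_tendsto hseq (Filter.Eventually.of_forall fun n => ?_)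
    have ht0 : (0 : ℝ) ≤ 1 - 1 / (n + 1 : ℝ) := by
      have : (1 : ℝ) / (n + 1) ≤ 1 := by
        rw [div_le_one (by positivity)]
        linarith
      linarith
    have ht1 : 1 - (1 - 1 / (n + 1 : ℝ)) = 1 / (n + 1 : ℝ) := by ring
    have htpos : 0 < 1 / (n + 1 : ℝ) := by positivity
    set t : ℝ := 1 - 1 / (n + 1 : ℝ) with htdef
    have hre : (t • z : ℂ).re = t * z.re := by simp [Complex.real_smul]
    have him : (t • z : ℂ).im = t * z.im := by simp [Complex.real_smul]
    simp only [hP, Set.mem_setOf_eq]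
    rw [hre, him, MM_segment]
    have hPD1 : (((1 - t : ℝ) : ℂ) • (1 : Matrix (Fin d) (Fin d) ℂ)).PosDef := by
      refine smulPD ?_ Matrix.PosDef.one
      rw [ht1]; exact htpos
    exact hPD1.add_posSemidef (smulPSD ht0 hz)
  apply Set.Subset.antisymm
  · exact hSP.trans (closure_mono hPC)
  · have : closure (connectedComponentIn U 0) ⊆ closure S := closure_mono hCS
    rwa [hSclosed.closure_eq] at this

end Main

end PolarNR

/-- The polar of the numerical range of `A = H + iK` is rigidly convex of degree
at most `d`: it is convex and is the closure of the connected component of the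
origin of `{q > 0}`, where `q(ξ, η) = det(I - ξH - ηK)` is an RZ polynomial of
degree at most `d` with `q(0,0) = 1`. -/
theorem polar_numericalRange_rigidlyConvex {d : ℕ} (A H K : Matrix (Fin d) (Fin d) ℂ)
    (hH : H.IsHermitian) (hK : K.IsHermitian) (hA : A = H + Complex.I • K) :
    Convex ℝ (polarSet (numericalRange A)) ∧
    ∃ q : MvPolynomial (Fin 2) ℝ,
      (∀ ξ η : ℝ, ((MvPolynomial.eval ![ξ, η] q : ℝ) : ℂ) =
        ((1 : Matrix (Fin d) (Fin d) ℂ) - (ξ : ℂ) • H - (η : ℂ) • K).det) ∧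
      IsRZPolynomial q ∧
      q.totalDegree ≤ d ∧
      MvPolynomial.eval ![0, 0] q = 1 ∧
      polarSet (numericalRange A) =
        closure (connectedComponentIn
          {z : ℂ | 0 < MvPolynomial.eval ![z.re, z.im] q} 0) := by
  refine ⟨PolarNR.convex_polarSet _, PolarNR.qR H K,
    fun ξ η => PolarNR.eval_qR H K hH hK ξ η, PolarNR.rz_qR hH hK, PolarNR.deg_qR H K,
    PolarNR.eval00_qR hH hK, ?_⟩
  rw [PolarNR.polar_eq_PSD hH hK hA, PolarNR.set_eq_closure hH hK]
end

section
/- Let A be a d×d complex matrix with hermitian decomposition A = H + iK. Then the numerical range W(A) has empty interior in ℂ if and only if the matrices I, H, K are linearly dependent over ℝ, which happens if and only if A = αR + βI for some hermitian matrix R and some α, β ∈ ℂ. -/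
open Matrix

section Aux
variable {d : ℕ}

noncomputable def qf (A : Matrix (Fin d) (Fin d) ℂ) (x : Fin d → ℂ) : ℂ := star x ⬝ᵥ A.mulVec x

lemma qf_def (A : Matrix (Fin d) (Fin d) ℂ) (x : Fin d → ℂ) : qf A x = star x ⬝ᵥ A.mulVec x := rfl


lemma qf_one (x : Fin d → ℂ) : qf 1 x = star x ⬝ᵥ x := by simp [qf]

lemma qf_smul_vec (B : Matrix (Fin d) (Fin d) ℂ) (c : ℂ) (x : Fin d → ℂ) :
    qf B (c • x) = (starRingEnd ℂ) c * c * qf B x := by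
  simp [qf, mulVec_smul, star_smul, smul_dotProduct, dotProduct_smul, smul_eq_mul]
  ring

lemma cross_smul_right (B : Matrix (Fin d) (Fin d) ℂ) (c : ℂ) (x y : Fin d → ℂ) :
    star x ⬝ᵥ B.mulVec (c • y) = c * (star x ⬝ᵥ B.mulVec y) := by
  simp [mulVec_smul, dotProduct_smul, smul_eq_mul]

lemma cross_smul_left (B : Matrix (Fin d) (Fin d) ℂ) (c : ℂ) (x y : Fin d → ℂ) :
    star (c • x) ⬝ᵥ B.mulVec y = (starRingEnd ℂ) c * (star x ⬝ᵥ B.mulVec y) := by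
  simp [star_smul, smul_dotProduct, smul_eq_mul]

lemma qf_expand (B : Matrix (Fin d) (Fin d) ℂ) (x y : Fin d → ℂ) (u v : ℝ) :
    qf B ((u:ℂ) • x + (v:ℂ) • y) =
      (u:ℂ)^2 * qf B x + (v:ℂ)^2 * qf B y
        + (u:ℂ)*(v:ℂ)*(star x ⬝ᵥ B.mulVec y + star y ⬝ᵥ B.mulVec x) := by
  simp [qf, mulVec_add, mulVec_smul, star_add, star_smul, add_dotProduct, dotProduct_add,
    smul_dotProduct, dotProduct_smul, smul_eq_mul, Complex.conj_ofReal]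
  ring

lemma star_cross (B : Matrix (Fin d) (Fin d) ℂ) (x y : Fin d → ℂ) :
    star (star x ⬝ᵥ B.mulVec y) = star y ⬝ᵥ Bᴴ.mulVec x := by
  simp [dotProduct, mulVec, Finset.mul_sum, conjTranspose_apply, mul_comm, mul_left_comm]
  rw [Finset.sum_comm]

lemma dot_star_self (x : Fin d → ℂ) :
    star x ⬝ᵥ x = ((∑ i, Complex.normSq (x i) : ℝ) : ℂ) := by
  push_cast
  simp [dotProduct, Complex.normSq_eq_conj_mul_self]

lemma ne_zero_of_unit {x : Fin d → ℂ} (hx : star x ⬝ᵥ x = 1) : x ≠ 0 := by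
  intro h; rw [h] at hx; simp at hx

lemma core (B : Matrix (Fin d) (Fin d) ℂ) (x y : Fin d → ℂ)
    (hx : star x ⬝ᵥ x = 1) (hy : star y ⬝ᵥ y = 1)
    (h0 : qf B x = 0) (h1 : qf B y = 1) (t : ℝ) (ht : t ∈ Set.Icc (0:ℝ) 1) :
    ∃ u, star u ⬝ᵥ u = 1 ∧ qf B u = (t : ℂ) := by
  classical
  set c1 := star x ⬝ᵥ B.mulVec y with hc1
  set c2 := star y ⬝ᵥ B.mulVec x with hc2
  set w := c1 - (starRingEnd ℂ) c2 with hw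
  -- choose a phase
  obtain ⟨μ, hμ1, hμ2⟩ : ∃ μ : ℂ, (starRingEnd ℂ) μ * μ = 1 ∧ (μ * w).im = 0 := by
    by_cases hw0 : w = 0
    · exact ⟨1, by simp, by simp [hw0]⟩
    · refine ⟨(starRingEnd ℂ) w / ((‖w‖ : ℝ) : ℂ), ?_, ?_⟩
      · rw [map_div₀, Complex.conj_conj, Complex.conj_ofReal, div_mul_div_comm,
          Complex.mul_conj]
        norm_cast
        rw [← sq, ← Complex.normSq_eq_norm_sq]
        exact div_self ((Complex.normSq_pos.mpr hw0).ne')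
      · have : (starRingEnd ℂ) w / ((‖w‖ : ℝ) : ℂ) * w
            = ((Complex.normSq w / ‖w‖ : ℝ) : ℂ) := by
          push_cast
          rw [div_mul_eq_mul_div, mul_comm]
          rw [Complex.mul_conj]
        rw [this, Complex.ofReal_im]
  set y' := μ • y with hy'def
  have hyu : star y' ⬝ᵥ y' = 1 := by
    have := qf_smul_vec 1 μ y
    rw [qf_one, qf_one, hy, hμ1] at this
    simpa [hy'def] using this
  have hqy' : qf B y' = 1 := by
    rw [hy'def, qf_smul_vec, h1, hμ1]; ring
  set cr := star x ⬝ᵥ B.mulVec y' + star y' ⬝ᵥ B.mulVec x with hcr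
  have hcrval : cr = μ * c1 + (starRingEnd ℂ) μ * c2 := by
    rw [hcr, hy'def, cross_smul_right, cross_smul_left, ← hc1, ← hc2]
  have hcrim : cr.im = 0 := by
    rw [hcrval]
    have e1 : (starRingEnd ℂ) μ * c2 = (starRingEnd ℂ) (μ * (starRingEnd ℂ) c2) := by
      simp [_root_.map_mul]
    rw [e1, Complex.add_im, Complex.conj_im]
    have e2 : (μ * c1).im - (μ * (starRingEnd ℂ) c2).im = (μ * w).im := by
      rw [← Complex.sub_im]
      congr 1
      ring
    linarith [e2, hμ2]
  have hcr_re : cr = ((cr.re : ℝ) : ℂ) := by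
    rw [← Complex.re_add_im cr, hcrim]
    simp
  -- overlap term
  set d1 := star x ⬝ᵥ (1 : Matrix (Fin d) (Fin d) ℂ).mulVec y' with hd1
  have hd2 : star y' ⬝ᵥ (1 : Matrix (Fin d) (Fin d) ℂ).mulVec x = (starRingEnd ℂ) d1 := by
    have := star_cross (1 : Matrix (Fin d) (Fin d) ℂ) x y'
    rw [conjTranspose_one] at this
    rw [hd1, ← this]
    rfl
  set N : ℝ → ℝ := fun s => (1-s)^2 + s^2 + s*(1-s)*(2*d1.re) with hN
  set p : ℝ → (Fin d → ℂ) := fun s => (((1-s : ℝ)):ℂ) • x + ((s : ℝ):ℂ) • y' with hp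
  have hNp : ∀ s : ℝ, star (p s) ⬝ᵥ (p s) = ((N s : ℝ) : ℂ) := by
    intro s
    have := qf_expand (1 : Matrix (Fin d) (Fin d) ℂ) x y' (1-s) s
    rw [qf_one, qf_one, qf_one, hx, hyu, ← hd1, hd2] at this
    rw [hp, this, hN]
    have : d1 + (starRingEnd ℂ) d1 = ((2 * d1.re : ℝ) : ℂ) := by
      rw [Complex.add_conj]
    rw [this]
    push_cast; ring
  have hqp : ∀ s : ℝ, qf B (p s) = ((s^2 + s*(1-s)*cr.re : ℝ) : ℂ) := by
    intro s
    have := qf_expand B x y' (1-s) s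
    rw [h0, hqy', ← hcr] at this
    rw [hp, this, hcr_re]
    simp only [Complex.ofReal_re]
    push_cast; ring
  have hpne : ∀ s : ℝ, p s ≠ 0 := by
    intro s hps
    by_cases hs : (s : ℂ) = 0
    · have hs0 : s = 0 := by exact_mod_cast hs
      rw [hp] at hps
      simp only [hs0] at hps
      push_cast at hps
      simp at hps
      exact ne_zero_of_unit hx hps
    · have hyx : y' = ((s:ℂ)⁻¹ * -((1-s : ℝ):ℂ)) • x := by
        have hps' : (((1-s:ℝ)):ℂ) • x + ((s:ℝ):ℂ) • y' = 0 := hps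
        have h3 : ((s:ℝ):ℂ) • y' = -((((1-s:ℝ)):ℂ) • x) :=
          eq_neg_of_add_eq_zero_right hps'
        calc y' = (s:ℂ)⁻¹ • (((s:ℝ):ℂ) • y') := by
              rw [← mul_smul, inv_mul_cancel₀ hs, one_smul]
          _ = (s:ℂ)⁻¹ • (-((((1-s:ℝ)):ℂ) • x)) := by rw [h3]
          _ = ((s:ℂ)⁻¹ * -((1-s : ℝ):ℂ)) • x := by
              rw [smul_neg, ← mul_smul, mul_neg, neg_smul]
      have := qf_smul_vec B ((s:ℂ)⁻¹ * -((1-s : ℝ):ℂ)) x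
      rw [← hyx, h0, hqy'] at this
      simp at this
  have hNpos : ∀ s : ℝ, 0 < N s := by
    intro s
    have h1' := hNp s
    rw [dot_star_self] at h1'
    have hNsum : N s = ∑ i, Complex.normSq (p s i) := by
      exact_mod_cast h1'.symm
    rw [hNsum]
    obtain ⟨i, hi⟩ : ∃ i, p s i ≠ 0 := by
      by_contra hcon
      push_neg at hcon
      exact hpne s (funext hcon)
    exact Finset.sum_pos' (fun j _ => Complex.normSq_nonneg _)
      ⟨i, Finset.mem_univ i, Complex.normSq_pos.mpr hi⟩
  set f : ℝ → ℝ := fun s => (s^2 + s*(1-s)*cr.re) / N s with hf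
  have hcont : Continuous f := by
    apply Continuous.div
    · fun_prop
    · rw [hN]; fun_prop
    · exact fun s => (hNpos s).ne'
  have hf0 : f 0 = 0 := by simp [hf]
  have hf1 : f 1 = 1 := by
    rw [hf, hN]; norm_num
  obtain ⟨s, hs, hfs⟩ : ∃ s ∈ Set.Icc (0:ℝ) 1, f s = t := by
    have := intermediate_value_Icc (by norm_num : (0:ℝ) ≤ 1) hcont.continuousOn
    rw [hf0, hf1] at this
    obtain ⟨s, hs, hfs⟩ := this ht
    exact ⟨s, hs, hfs⟩
  set r : ℝ := (Real.sqrt (N s))⁻¹ with hr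
  have hr2 : r^2 * N s = 1 := by
    rw [hr, inv_pow, Real.sq_sqrt (hNpos s).le]
    exact inv_mul_cancel₀ (hNpos s).ne'
  have hrr : r * r = (N s)⁻¹ := by
    rw [hr, ← mul_inv, Real.mul_self_sqrt (hNpos s).le]
  refine ⟨(r : ℂ) • p s, ?_, ?_⟩
  · have := qf_smul_vec 1 (r : ℂ) (p s)
    rw [qf_one, qf_one, hNp s] at this
    rw [this, Complex.conj_ofReal]
    norm_cast
    linear_combination hr2
  · rw [qf_smul_vec, hqp s, Complex.conj_ofReal]
    have h5 : r * r * (s ^ 2 + s * (1 - s) * cr.re) = t := by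
      rw [hrr, ← hfs, hf, inv_mul_eq_div]
    exact_mod_cast h5


lemma qf_add_vec (M : Matrix (Fin d) (Fin d) ℂ) (u v : Fin d → ℂ) :
    qf M (u + v) = qf M u + qf M v + (star u ⬝ᵥ M.mulVec v + star v ⬝ᵥ M.mulVec u) := by
  simp [qf, mulVec_add, star_add, add_dotProduct, dotProduct_add]
  ring

lemma cross_single (M : Matrix (Fin d) (Fin d) ℂ) (i j : Fin d) (a b : ℂ) :
    star (Pi.single i a) ⬝ᵥ M.mulVec (Pi.single j b) = (starRingEnd ℂ) a * M i j * b := by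
  have hs : star (Pi.single i a) = (Pi.single i ((starRingEnd ℂ) a) : Fin d → ℂ) := by
    ext k
    by_cases h : k = i <;> simp [Pi.single_apply, h]
  rw [hs]
  simp [dotProduct, mulVec_single, Pi.single_apply, ite_mul, Finset.sum_ite_eq']
  ring

lemma qf_zero_of_forall {M : Matrix (Fin d) (Fin d) ℂ} (h : ∀ x, qf M x = 0) : M = 0 := by
  have qfs : ∀ i j a b, qf M (Pi.single i a + Pi.single j b)
      = (starRingEnd ℂ) a * M i i * a + (starRingEnd ℂ) b * M j j * b
        + ((starRingEnd ℂ) a * M i j * b + (starRingEnd ℂ) b * M j i * a) := by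
    intro i j a b
    rw [qf_add_vec]
    simp only [qf, cross_single]
  have diag : ∀ k, M k k = 0 := by
    intro k
    have h0 := h (Pi.single k 1 + Pi.single k 0)
    rw [qfs] at h0
    simpa using h0
  ext i j
  by_cases hij : i = j
  · subst hij; simpa using diag i
  · have h1 := h (Pi.single i 1 + Pi.single j 1)
    have h2 := h (Pi.single i 1 + Pi.single j Complex.I)
    rw [qfs] at h1 h2
    simp [diag] at h1 h2
    -- h1 : M i j + M j i = 0, h2 : M i j * I + (-I) * M j i = 0 (roughly)
    simp only [Matrix.zero_apply]
    linear_combination h1/2 - Complex.I/2 * h2 + ((M i j - M j i)/2) * Complex.I_sq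


lemma qf_add (M N : Matrix (Fin d) (Fin d) ℂ) (x : Fin d → ℂ) :
    qf (M + N) x = qf M x + qf N x := by
  simp [qf, add_mulVec, dotProduct_add]

lemma qf_smul (c : ℂ) (M : Matrix (Fin d) (Fin d) ℂ) (x : Fin d → ℂ) :
    qf (c • M) x = c * qf M x := by
  simp [qf, smul_mulVec, dotProduct_smul]



lemma qf_conj (B : Matrix (Fin d) (Fin d) ℂ) (hB : B.IsHermitian) (x : Fin d → ℂ) :
    qf B x = ((qf B x).re : ℂ) := by
  have h := star_cross B x x
  rw [hB.eq] at h
  have h2 : (starRingEnd ℂ) (qf B x) = qf B x := h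
  exact ((Complex.conj_eq_iff_re).mp h2).symm

lemma rsmul (r : ℝ) (M : Matrix (Fin d) (Fin d) ℂ) : r • M = (r : ℂ) • M := by
  ext i j
  simp [Matrix.smul_apply, Complex.real_smul]

-- a real line has empty interior
lemma line_interior (b c e : ℝ) (hbc : b ≠ 0 ∨ c ≠ 0) (s : Set ℂ)
    (hline : ∀ z ∈ s, b * z.re + c * z.im = e) : interior s = ∅ := by
  by_contra hne
  obtain ⟨z₀, hz₀⟩ := Set.nonempty_iff_ne_empty.mpr hne
  obtain ⟨ε, hε, hball⟩ := Metric.isOpen_iff.mp isOpen_interior z₀ hz₀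
  set v : ℂ := ⟨b, c⟩ with hv
  have hvne : v ≠ 0 := by
    intro h
    rw [Complex.ext_iff] at h
    simp only [hv, Complex.zero_re, Complex.zero_im] at h
    rcases hbc with h1 | h1
    · exact h1 h.1
    · exact h1 h.2
  have hvabs : 0 < ‖v‖ := norm_pos_iff.mpr hvne
  set δ : ℝ := ε / (2 * ‖v‖) with hδ
  have hδpos : 0 < δ := by positivity
  set w : ℂ := z₀ + (δ : ℂ) * v with hwdef
  have hwmem : w ∈ s := by
    apply interior_subset
    apply hball
    rw [Metric.mem_ball, Complex.dist_eq]
    have : w - z₀ = (δ:ℂ) * v := by rw [hwdef]; ring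
    rw [this, norm_mul, Complex.norm_real, Real.norm_eq_abs, abs_of_pos hδpos]
    rw [hδ]
    rw [div_mul_eq_mul_div]
    rw [div_lt_iff₀ (by positivity)]
    nlinarith [hvabs]
  have h1 := hline w hwmem
  have h2 := hline z₀ (interior_subset hz₀)
  have hwre : w.re = z₀.re + δ * b := by
    rw [hwdef]; simp [hv, Complex.add_re, Complex.mul_re]
  have hwim : w.im = z₀.im + δ * c := by
    rw [hwdef]; simp [hv, Complex.add_im, Complex.mul_im]
  rw [hwre, hwim] at h1
  have hzero : δ * (b^2 + c^2) = 0 := by nlinarith [h1, h2]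
  have : b^2 + c^2 = 0 := by
    rcases mul_eq_zero.mp hzero with h | h
    · exact absurd h hδpos.ne'
    · exact h
  rcases hbc with h1' | h1'
  · have hb2 : b^2 = 0 := by nlinarith [sq_nonneg b, sq_nonneg c]
    exact pow_ne_zero 2 h1' hb2
  · have hc2 : c^2 = 0 := by nlinarith [sq_nonneg b, sq_nonneg c]
    exact pow_ne_zero 2 h1' hc2

lemma qf_zero_extend {M : Matrix (Fin d) (Fin d) ℂ}
    (h : ∀ x, star x ⬝ᵥ x = 1 → qf M x = 0) : ∀ x, qf M x = 0 := by
  intro x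
  by_cases hx : x = 0
  · simp [qf, hx]
  · set n : ℝ := ∑ i, Complex.normSq (x i) with hn
    have hnpos : 0 < n := by
      obtain ⟨i, hi⟩ : ∃ i, x i ≠ 0 := by
        by_contra hcon
        push_neg at hcon
        exact hx (funext hcon)
      exact Finset.sum_pos' (fun j _ => Complex.normSq_nonneg _)
        ⟨i, Finset.mem_univ i, Complex.normSq_pos.mpr hi⟩
    set r : ℝ := (Real.sqrt n)⁻¹ with hr
    have hrr : r * r = n⁻¹ := by
      rw [hr, ← mul_inv, Real.mul_self_sqrt hnpos.le]
    have hrpos : 0 < r := by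
      rw [hr]
      exact inv_pos.mpr (Real.sqrt_pos.mpr hnpos)
    have hrne : (r:ℂ) ≠ 0 := by exact_mod_cast hrpos.ne'
    have hunit : star ((r:ℂ) • x) ⬝ᵥ ((r:ℂ) • x) = 1 := by
      have h1 := qf_smul_vec 1 (r:ℂ) x
      rw [qf_one, qf_one] at h1
      rw [h1, Complex.conj_ofReal, dot_star_self, ← hn]
      rw [← Complex.ofReal_mul, ← Complex.ofReal_mul]
      norm_cast
      rw [hrr]
      exact inv_mul_cancel₀ hnpos.ne'
    have h0 := h _ hunit
    rw [qf_smul_vec, Complex.conj_ofReal] at h0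
    have : ((r:ℂ) * r) ≠ 0 := by
      exact mul_ne_zero hrne hrne
    exact (mul_eq_zero.mp h0).resolve_left this

lemma nr_convex (A : Matrix (Fin d) (Fin d) ℂ) : Convex ℝ (numericalRange A) := by
  intro z1 hz1 z2 hz2 a b ha hb hab
  by_cases hz : z1 = z2
  · subst hz
    have : a • z1 + b • z1 = z1 := by
      rw [← add_smul, hab, one_smul]
    rw [this]; exact hz1
  obtain ⟨x, hx, hxA⟩ := hz1
  obtain ⟨y, hy, hyA⟩ := hz2
  have hne : z2 - z1 ≠ 0 := sub_ne_zero.mpr (Ne.symm hz)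
  set γ : ℂ := (z2 - z1)⁻¹ with hγ
  set B := γ • A + (-(γ*z1)) • (1 : Matrix (Fin d) (Fin d) ℂ) with hB
  have hqB : ∀ v : Fin d → ℂ, qf B v = γ * qf A v + (-(γ*z1)) * (star v ⬝ᵥ v) := by
    intro v; rw [hB, qf_add, qf_smul, qf_smul, qf_one]
  have hγmul : (z2 - z1) * γ = 1 := mul_inv_cancel₀ hne
  have hBx : qf B x = 0 := by
    rw [hqB, qf_def, hxA, hx]; ring
  have hBy : qf B y = 1 := by
    rw [hqB, qf_def, hyA, hy]
    have : γ * z2 + -(γ * z1) * 1 = (z2 - z1) * γ := by ring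
    rw [this, hγmul]
  obtain ⟨u, hu, huB⟩ := core B x y hx hy hBx hBy b (Set.mem_Icc.mpr ⟨hb, by linarith⟩)
  refine ⟨u, hu, ?_⟩
  have h4 := hqB u
  rw [huB, hu, mul_one] at h4
  have h6 : (z2 - z1) * (b:ℂ) = qf A u - z1 := by
    calc (z2 - z1) * (b:ℂ) = (z2 - z1) * (γ * qf A u + -(γ * z1)) := by rw [← h4]
    _ = ((z2 - z1) * γ) * qf A u - ((z2 - z1) * γ) * z1 := by ring
    _ = qf A u - z1 := by rw [hγmul]; ring
  have hab'' : (a:ℂ) + (b:ℂ) = 1 := by exact_mod_cast hab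
  show star u ⬝ᵥ A.mulVec u = a • z1 + b • z2
  rw [← qf_def, Complex.real_smul, Complex.real_smul]
  linear_combination -h6 - z1 * hab''

lemma notLI_of_combo {H K : Matrix (Fin d) (Fin d) ℂ} (g0 g1 g2 : ℝ)
    (hne : g0 ≠ 0 ∨ g1 ≠ 0 ∨ g2 ≠ 0)
    (hcombo : (g0:ℂ) • (1 : Matrix (Fin d) (Fin d) ℂ) + (g1:ℂ) • H + (g2:ℂ) • K = 0) :
    ¬ LinearIndependent ℝ ![(1 : Matrix (Fin d) (Fin d) ℂ), H, K] := by
  rw [Fintype.not_linearIndependent_iff]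
  refine ⟨![g0, g1, g2], ?_, ?_⟩
  · rw [Fin.sum_univ_three]
    simp only [Matrix.cons_val_zero, Matrix.cons_val_one, Matrix.head_cons,
      Matrix.cons_val_two, Matrix.tail_cons]
    rw [rsmul, rsmul, rsmul]
    exact hcombo
  · rcases hne with h | h | h
    · exact ⟨0, by simpa using h⟩
    · exact ⟨1, by simpa using h⟩
    · exact ⟨2, by simpa using h⟩

lemma combo_of_notLI {H K : Matrix (Fin d) (Fin d) ℂ}
    (h : ¬ LinearIndependent ℝ ![(1 : Matrix (Fin d) (Fin d) ℂ), H, K]) :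
    ∃ g0 g1 g2 : ℝ, (g0 ≠ 0 ∨ g1 ≠ 0 ∨ g2 ≠ 0) ∧
      (g0:ℂ) • (1 : Matrix (Fin d) (Fin d) ℂ) + (g1:ℂ) • H + (g2:ℂ) • K = 0 := by
  rw [Fintype.not_linearIndependent_iff] at h
  obtain ⟨g, hsum, i, hgi⟩ := h
  refine ⟨g 0, g 1, g 2, ?_, ?_⟩
  · fin_cases i
    · exact Or.inl hgi
    · exact Or.inr (Or.inl hgi)
    · exact Or.inr (Or.inr hgi)
  · rw [Fin.sum_univ_three] at hsum
    simp only [Matrix.cons_val_zero, Matrix.cons_val_one, Matrix.head_cons,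
      Matrix.cons_val_two, Matrix.tail_cons] at hsum
    rw [rsmul, rsmul, rsmul] at hsum
    exact hsum

lemma mem_re_im {A H K : Matrix (Fin d) (Fin d) ℂ}
    (hH : H.IsHermitian) (hK : K.IsHermitian) (hA : A = H + Complex.I • K)
    (x : Fin d → ℂ) :
    (qf A x).re = (qf H x).re ∧ (qf A x).im = (qf K x).re := by
  have hz : qf A x = ((qf H x).re : ℂ) + Complex.I * ((qf K x).re : ℂ) := by
    rw [hA, qf_add, qf_smul, ← qf_conj H hH, ← qf_conj K hK]
  constructor
  · rw [hz]; simp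
  · rw [hz]; simp

lemma dirB {A H K : Matrix (Fin d) (Fin d) ℂ}
    (hH : H.IsHermitian) (hK : K.IsHermitian) (hA : A = H + Complex.I • K)
    (h : ¬ LinearIndependent ℝ ![(1 : Matrix (Fin d) (Fin d) ℂ), H, K]) :
    interior (numericalRange A) = ∅ := by
  obtain ⟨g0, g1, g2, hne, hcombo⟩ := combo_of_notLI h
  by_cases hbc : g1 = 0 ∧ g2 = 0
  · obtain ⟨h1, h2⟩ := hbc
    have hg0 : g0 ≠ 0 := by
      rcases hne with h | h | h
      · exact h
      · exact absurd h1 h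
      · exact absurd h2 h
    have hone : (1 : Matrix (Fin d) (Fin d) ℂ) = 0 := by
      rw [h1, h2] at hcombo
      simp only [Complex.ofReal_zero, zero_smul, add_zero] at hcombo
      have : (g0:ℂ) ≠ 0 := by exact_mod_cast hg0
      rcases smul_eq_zero.mp hcombo with h | h
      · exact absurd h this
      · exact h
    have hempty : numericalRange A = ∅ := by
      ext z
      simp only [numericalRange, Set.mem_setOf_eq, Set.mem_empty_iff_false, iff_false]
      rintro ⟨x, hx, -⟩
      have hx0 : x = 0 := by
        have : (1 : Matrix (Fin d) (Fin d) ℂ).mulVec x = x := one_mulVec x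
        rw [hone, zero_mulVec] at this
        exact this.symm
      rw [hx0] at hx
      simp at hx
    rw [hempty, interior_empty]
  · have hbc' : g1 ≠ 0 ∨ g2 ≠ 0 := by tauto
    apply line_interior g1 g2 (-g0) hbc'
    rintro z ⟨x, hx, hxz⟩
    have hq : qf ((g0:ℂ) • (1 : Matrix (Fin d) (Fin d) ℂ) + (g1:ℂ) • H + (g2:ℂ) • K) x = 0 := by
      rw [hcombo]
      simp [qf]
    rw [qf_add, qf_add, qf_smul, qf_smul, qf_smul, qf_one, hx, mul_one] at hq
    rw [qf_conj H hH, qf_conj K hK] at hq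
    have hreal : g0 + g1 * (qf H x).re + g2 * (qf K x).re = 0 := by
      have : ((g0 + g1 * (qf H x).re + g2 * (qf K x).re : ℝ) : ℂ) = 0 := by
        push_cast
        linear_combination hq
      exact_mod_cast this
    obtain ⟨hre, him⟩ := mem_re_im hH hK hA x
    have hzq : z = qf A x := hxz.symm
    rw [hzq, hre, him]
    linarith

lemma dirA {A H K : Matrix (Fin d) (Fin d) ℂ}
    (hH : H.IsHermitian) (hK : K.IsHermitian) (hA : A = H + Complex.I • K)
    (hint : interior (numericalRange A) = ∅) :
    ¬ LinearIndependent ℝ ![(1 : Matrix (Fin d) (Fin d) ℂ), H, K] := by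
  intro hli
  have hone : (1 : Matrix (Fin d) (Fin d) ℂ) ≠ 0 := by
    have := hli.ne_zero 0
    simpa using this
  have hd : 0 < d := by
    by_contra hcon
    push_neg at hcon
    have hd0 : d = 0 := by omega
    apply hone
    subst hd0
    ext i j
    exact i.elim0
  set x0 : Fin d → ℂ := Pi.single ⟨0, hd⟩ 1 with hx0def
  have hx0 : star x0 ⬝ᵥ x0 = 1 := by
    rw [dot_star_self]
    have : ∑ i, Complex.normSq (x0 i) = 1 := by
      rw [hx0def]
      simp [Pi.single_apply, apply_ite]
    rw [this]
    norm_num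
  have hmem : qf A x0 ∈ numericalRange A := ⟨x0, hx0, rfl⟩
  have hConv : Convex ℝ (numericalRange A) := nr_convex A
  have hspan : affineSpan ℝ (numericalRange A) ≠ ⊤ := by
    intro htop
    rcases hConv.interior_nonempty_iff_affineSpan_eq_top.mpr htop with ⟨z, hz⟩
    rw [hint] at hz
    exact hz
  have hdir : (affineSpan ℝ (numericalRange A)).direction ≠ ⊤ := by
    intro hdt
    exact hspan ((AffineSubspace.direction_eq_top_iff_of_nonempty
      ⟨_, subset_affineSpan ℝ _ hmem⟩).mp hdt)
  obtain ⟨v, hv0, hvperp⟩ : ∃ v : ℂ, v ≠ 0 ∧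
      ∀ w ∈ (affineSpan ℝ (numericalRange A)).direction, inner ℝ v w = (0:ℝ) := by
    have hbot : ((affineSpan ℝ (numericalRange A)).direction)ᗮ ≠ ⊥ := by
      simpa [Submodule.orthogonal_eq_bot_iff] using hdir
    obtain ⟨v, hv, hv0⟩ := Submodule.exists_mem_ne_zero_of_ne_bot hbot
    exact ⟨v, hv0, fun w hw => (Submodule.mem_orthogonal' _ v).mp hv w hw⟩
  set p0 := qf A x0 with hp0
  have hkey : ∀ z ∈ numericalRange A,
      v.re * z.re + v.im * z.im = v.re * p0.re + v.im * p0.im := by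
    intro z hz
    have h5 := hvperp (z - p0) (AffineSubspace.vsub_mem_direction
      (subset_affineSpan ℝ _ hz) (subset_affineSpan ℝ _ hmem))
    rw [Complex.inner] at h5
    simp only [Complex.mul_re, Complex.conj_re, Complex.conj_im, Complex.sub_re,
      Complex.sub_im] at h5
    linarith
  set e : ℝ := v.re * p0.re + v.im * p0.im with he
  set M : Matrix (Fin d) (Fin d) ℂ :=
    (v.re:ℂ) • H + (v.im:ℂ) • K + (-e:ℂ) • 1 with hM
  have hMq : ∀ x : Fin d → ℂ, star x ⬝ᵥ x = 1 → qf M x = 0 := by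
    intro x hx
    have hz := hkey (qf A x) ⟨x, hx, rfl⟩
    obtain ⟨hre, him⟩ := mem_re_im hH hK hA x
    rw [hre, him] at hz
    rw [hM, qf_add, qf_add, qf_smul, qf_smul, qf_smul, qf_one, hx, mul_one]
    rw [qf_conj H hH, qf_conj K hK]
    have : ((v.re * (qf H x).re + v.im * (qf K x).re - e : ℝ) : ℂ) = 0 := by
      rw [show v.re * (qf H x).re + v.im * (qf K x).re - e = 0 by linarith]
      norm_num
    push_cast at this
    linear_combination this
  have hM0 : M = 0 := qf_zero_of_forall (qf_zero_extend hMq)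
  have hcombo : ((-e : ℝ):ℂ) • (1 : Matrix (Fin d) (Fin d) ℂ)
      + (v.re:ℂ) • H + (v.im:ℂ) • K = 0 := by
    rw [← hM0, hM]
    push_cast
    module
  have := Fintype.linearIndependent_iff.mp hli ![-e, v.re, v.im] (by
    rw [Fin.sum_univ_three]
    simp only [Matrix.cons_val_zero, Matrix.cons_val_one, Matrix.head_cons,
      Matrix.cons_val_two, Matrix.tail_cons]
    rw [rsmul, rsmul, rsmul]
    exact_mod_cast hcombo)
  apply hv0
  have h1 := this 1
  have h2 := this 2
  simp at h1 h2
  exact Complex.ext h1 h2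

lemma exR_of_notLI {A H K : Matrix (Fin d) (Fin d) ℂ}
    (hH : H.IsHermitian) (hK : K.IsHermitian) (hA : A = H + Complex.I • K)
    (h : ¬ LinearIndependent ℝ ![(1 : Matrix (Fin d) (Fin d) ℂ), H, K]) :
    ∃ R : Matrix (Fin d) (Fin d) ℂ, R.IsHermitian ∧
      ∃ α β : ℂ, A = α • R + β • (1 : Matrix (Fin d) (Fin d) ℂ) := by
  obtain ⟨g0, g1, g2, hne, hcombo⟩ := combo_of_notLI h
  by_cases hg2 : g2 ≠ 0
  · have hg2c : (g2:ℂ) ≠ 0 := by exact_mod_cast hg2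
    have hKeq : K = (-(g0:ℂ)/g2) • (1 : Matrix (Fin d) (Fin d) ℂ) + (-(g1:ℂ)/g2) • H := by
      apply smul_right_injective _ hg2c
      show (g2:ℂ) • K = (g2:ℂ) • ((-(g0:ℂ)/g2) • (1 : Matrix (Fin d) (Fin d) ℂ) + (-(g1:ℂ)/g2) • H)
      have h' : (g2:ℂ) • K = -((g0:ℂ) • (1 : Matrix (Fin d) (Fin d) ℂ) + (g1:ℂ) • H) :=
        eq_neg_of_add_eq_zero_right hcombo
      rw [h']
      match_scalars <;> field_simp <;> ring
    refine ⟨H, hH, 1 - Complex.I * (g1:ℂ)/g2, -(Complex.I * (g0:ℂ)/g2), ?_⟩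
    rw [hA, hKeq]
    match_scalars <;> field_simp <;> ring
  · push_neg at hg2
    by_cases hg1 : g1 ≠ 0
    · have hg1c : (g1:ℂ) ≠ 0 := by exact_mod_cast hg1
      have hHeq : H = (-(g0:ℂ)/g1) • (1 : Matrix (Fin d) (Fin d) ℂ) := by
        apply smul_right_injective _ hg1c
        show (g1:ℂ) • H = (g1:ℂ) • ((-(g0:ℂ)/g1) • (1 : Matrix (Fin d) (Fin d) ℂ))
        have h' : (g1:ℂ) • H = -((g0:ℂ) • (1 : Matrix (Fin d) (Fin d) ℂ)) := by
          have := hcombo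
          rw [hg2] at this
          simp only [Complex.ofReal_zero, zero_smul, add_zero] at this
          exact eq_neg_of_add_eq_zero_right this
        rw [h']
        match_scalars <;> field_simp <;> ring
      refine ⟨K, hK, Complex.I, -(g0:ℂ)/g1, ?_⟩
      rw [hA, hHeq]
      module
    · push_neg at hg1
      have hg0 : g0 ≠ 0 := by tauto
      have hg0c : (g0:ℂ) ≠ 0 := by exact_mod_cast hg0
      have hone : (1 : Matrix (Fin d) (Fin d) ℂ) = 0 := by
        rw [hg1, hg2] at hcombo
        simp only [Complex.ofReal_zero, zero_smul, add_zero] at hcombo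
        rcases smul_eq_zero.mp hcombo with h' | h'
        · exact absurd h' hg0c
        · exact h'
      have hA0 : A = 0 := by
        calc A = A * 1 := (mul_one A).symm
        _ = A * 0 := by rw [hone]
        _ = 0 := mul_zero A
      exact ⟨0, isHermitian_zero, 0, 0, by simp [hA0]⟩

lemma notLI_of_exR {A H K : Matrix (Fin d) (Fin d) ℂ}
    (hH : H.IsHermitian) (hK : K.IsHermitian) (hA : A = H + Complex.I • K)
    (hex : ∃ R : Matrix (Fin d) (Fin d) ℂ, R.IsHermitian ∧
      ∃ α β : ℂ, A = α • R + β • (1 : Matrix (Fin d) (Fin d) ℂ)) :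
    ¬ LinearIndependent ℝ ![(1 : Matrix (Fin d) (Fin d) ℂ), H, K] := by
  obtain ⟨R, hR, α, β, hAR⟩ := hex
  have h1 : H + Complex.I • K = α • R + β • (1 : Matrix (Fin d) (Fin d) ℂ) := by
    rw [← hA, hAR]
  have h2 : H - Complex.I • K
      = (starRingEnd ℂ α) • R + (starRingEnd ℂ β) • (1 : Matrix (Fin d) (Fin d) ℂ) := by
    have h2' := congrArg conjTranspose h1
    rw [conjTranspose_add, conjTranspose_add, conjTranspose_smul, conjTranspose_smul,
      conjTranspose_smul, conjTranspose_one, hH.eq, hK.eq, hR.eq] at h2'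
    simp only [Complex.star_def] at h2'
    rw [Complex.conj_I] at h2'
    rw [sub_eq_add_neg, ← neg_smul]
    exact h2'
  have hH2 : H = ((α.re : ℝ):ℂ) • R + ((β.re : ℝ):ℂ) • (1 : Matrix (Fin d) (Fin d) ℂ) := by
    apply smul_right_injective _ (two_ne_zero (α := ℂ))
    show (2:ℂ) • H = (2:ℂ) • (((α.re : ℝ):ℂ) • R + ((β.re : ℝ):ℂ) • (1 : Matrix (Fin d) (Fin d) ℂ))
    calc (2:ℂ) • H = (H + Complex.I • K) + (H - Complex.I • K) := by module
    _ = (α • R + β • 1) + ((starRingEnd ℂ α) • R + (starRingEnd ℂ β) • 1) := by rw [h1, h2]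
    _ = (α + starRingEnd ℂ α) • R + (β + starRingEnd ℂ β) • (1 : Matrix (Fin d) (Fin d) ℂ) := by
        module
    _ = (2:ℂ) • (((α.re : ℝ):ℂ) • R + ((β.re : ℝ):ℂ) • 1) := by
        rw [Complex.add_conj, Complex.add_conj]
        push_cast
        module
  have hK2 : K = ((α.im : ℝ):ℂ) • R + ((β.im : ℝ):ℂ) • (1 : Matrix (Fin d) (Fin d) ℂ) := by
    apply smul_right_injective _ (mul_ne_zero (two_ne_zero (α := ℂ)) Complex.I_ne_zero)
    show ((2:ℂ) * Complex.I) • K = ((2:ℂ) * Complex.I) • (((α.im : ℝ):ℂ) • R + ((β.im : ℝ):ℂ) • (1 : Matrix (Fin d) (Fin d) ℂ))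
    calc ((2:ℂ) * Complex.I) • K = (H + Complex.I • K) - (H - Complex.I • K) := by module
    _ = (α • R + β • 1) - ((starRingEnd ℂ α) • R + (starRingEnd ℂ β) • 1) := by rw [h1, h2]
    _ = (α - starRingEnd ℂ α) • R + (β - starRingEnd ℂ β) • (1 : Matrix (Fin d) (Fin d) ℂ) := by
        module
    _ = ((2:ℂ) * Complex.I) • (((α.im : ℝ):ℂ) • R + ((β.im : ℝ):ℂ) • 1) := by
        rw [Complex.sub_conj, Complex.sub_conj]
        push_cast
        module
  by_cases hα : α = 0
  · apply notLI_of_combo β.re (-1) 0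
    · exact Or.inr (Or.inl (by norm_num))
    · rw [hH2, hα]
      push_cast
      simp only [Complex.zero_re, Complex.ofReal_zero, zero_smul, zero_add]
      module
  · apply notLI_of_combo (α.re * β.im - α.im * β.re) α.im (-α.re)
    · have : α.re ≠ 0 ∨ α.im ≠ 0 := by
        by_contra hcon
        push_neg at hcon
        exact hα (Complex.ext hcon.1 hcon.2)
      rcases this with h' | h'
      · exact Or.inr (Or.inr (neg_ne_zero.mpr h'))
      · exact Or.inr (Or.inl h')
    · rw [hH2, hK2]
      push_cast
      match_scalars <;> ring

end Aux

/-- For `A = H + iK` with `H, K` hermitian, the numerical range `W(A)` has empty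
interior in `ℂ` iff `I, H, K` are linearly dependent over `ℝ`, iff
`A = αR + βI` for some hermitian `R` and `α, β ∈ ℂ`. -/
theorem numericalRange_empty_interior_iff {d : ℕ} (A H K : Matrix (Fin d) (Fin d) ℂ)
    (hH : H.IsHermitian) (hK : K.IsHermitian) (hA : A = H + Complex.I • K) :
    (interior (numericalRange A) = ∅ ↔
      ¬ LinearIndependent ℝ ![(1 : Matrix (Fin d) (Fin d) ℂ), H, K]) ∧
    (interior (numericalRange A) = ∅ ↔
      ∃ R : Matrix (Fin d) (Fin d) ℂ, R.IsHermitian ∧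
        ∃ α β : ℂ, A = α • R + β • (1 : Matrix (Fin d) (Fin d) ℂ)) := by
  have iff1 : interior (numericalRange A) = ∅ ↔
      ¬ LinearIndependent ℝ ![(1 : Matrix (Fin d) (Fin d) ℂ), H, K] :=
    ⟨dirA hH hK hA, dirB hH hK hA⟩
  have iff2 : (¬ LinearIndependent ℝ ![(1 : Matrix (Fin d) (Fin d) ℂ), H, K]) ↔
      ∃ R : Matrix (Fin d) (Fin d) ℂ, R.IsHermitian ∧
        ∃ α β : ℂ, A = α • R + β • (1 : Matrix (Fin d) (Fin d) ℂ) :=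
    ⟨exR_of_notLI hH hK hA, notLI_of_exR hH hK hA⟩
  exact ⟨iff1, iff1.trans iff2⟩
end
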